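/- Dual Zhedanov relation for the Verde-Star operator pair: with K_1, K_2 and parameters as in the Verde-Star setup, (q+q^{-1}) K_1 K_2 K_1 − K_1² K_2 − K_2 K_1² = C_2 K_2 + D K_1 + G_2, where C_2 = (q−q^{-1})² a_1 a_2, D = −(q^{1/2}−q^{-1/2})²((q^{-1/2}a_1 − q^{1/2}a_2)(q^{-1/2}b_1 − q^{1/2}b_2) + d_1 + d_2), and G_2 = (q^{1/2}−q^{-1/2})(q−q^{-1})(q^{-1/2}a_1 d_2 + q^{1/2}a_2 d_1). -/

import Mathlib

set_option linter.unreachableTactic false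
set_option linter.unnecessarySeqFocus false
set_option linter.unusedTactic false
set_option maxHeartbeats 4000000
set_option maxRecDepth 100000

lemma aux_zpow {F : Type*} [Field F] (a : F) (k : ℕ) : a ^ (-(k : ℤ)) = (a ^ k)⁻¹ := by
  rw [zpow_neg, zpow_natCast]

lemma aux_zpow2 {F : Type*} [Field F] (a : F) (k : ℕ) :
    a ^ (-(2 * k : ℤ)) = ((a ^ k)⁻¹) ^ 2 := by
  rw [show (-(2 * k : ℤ)) = -((2 * k : ℕ) : ℤ) by push_cast; ring, zpow_neg, zpow_natCast,
    pow_mul', inv_pow]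

set_option linter.unreachableTactic false
set_option linter.unnecessarySeqFocus false
set_option linter.unusedTactic false

lemma master1 {F : Type*} [Field F] (s r t u a1 a2 b1 b2 d0 d1 d2 d3 d4 F0 F1 F2 F3 : F)
    (hsr : s * r = 1) (htu : t * u = 1)
    (hd3 : d3 = r ^ 2 * a1 * b1) (hd4 : d4 = s ^ 2 * a2 * b2)
    (hd0 : d0 = -(d1 + d2 + d3 + d4)) :
    (s ^ 2 + r ^ 2) * ((a1 * t + a2 * u) * ((b1 * t + b2 * u) * ((a1 * t + a2 * u) * F1 + (d3 * t ^ 2 * s ^ 4 + d1 * t * s ^ 2 + d0 + d2 * u * r ^ 2 + d4 * u ^ 2 * r ^ 4) * F2) + ((a1 * t * r ^ 2 + a2 * u * s ^ 2) * F0 + (d3 * t ^ 2 + d1 * t + d0 + d2 * u + d4 * u ^ 2) * F1)) + (d3 * t ^ 2 * s ^ 4 + d1 * t * s ^ 2 + d0 + d2 * u * r ^ 2 + d4 * u ^ 2 * r ^ 4) * ((b1 * t * s ^ 2 + b2 * u * r ^ 2) * ((a1 * t * s ^ 2 + a2 * u * r ^ 2) * F2 + (d3 * t ^ 2 * s ^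 8 + d1 * t * s ^ 4 + d0 + d2 * u * r ^ 4 + d4 * u ^ 2 * r ^ 8) * F3) + ((a1 * t + a2 * u) * F1 + (d3 * t ^ 2 * s ^ 4 + d1 * t * s ^ 2 + d0 + d2 * u * r ^ 2 + d4 * u ^ 2 * r ^ 4) * F2))) - ((a1 * t + a2 * u) * ((a1 * t + a2 * u) * ((b1 * t + b2 * u) * F1 + F0) + (d3 * t ^ 2 * s ^ 4 + d1 * t * s ^ 2 + d0 + d2 * u * r ^ 2 + d4 * u ^ 2 * r ^ 4) * ((b1 * t * s ^ 2 + b2 * u * r ^ 2) * F2 + F1)) + (d3 * t ^ 2 * s ^ 4 + d1 * t * s ^ 2 + d0 + d2 * u * r ^ 2 + d4 * u ^ 2 * r ^ 4) * ((a1 * t * s ^ 2 + a2 * u * r ^ 2) * ((b1 * t * s ^ 2 + b2 * u * r ^ 2) * F2 + F1) + (d3 * t ^ 2 * s ^ 8 + d1 * t * s ^ 4 + d0 + d2 * u * r ^ 4 + d4 * u ^ 2 * r ^ 8) * ((b1 * t * s ^ 4 + b2 * u * r ^ 4) * F3 + F2))) - ((b1 * t + b2 * u) * ((a1 * t + a2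 * u) * ((a1 * t + a2 * u) * F1 + (d3 * t ^ 2 * s ^ 4 + d1 * t * s ^ 2 + d0 + d2 * u * r ^ 2 + d4 * u ^ 2 * r ^ 4) * F2) + (d3 * t ^ 2 * s ^ 4 + d1 * t * s ^ 2 + d0 + d2 * u * r ^ 2 + d4 * u ^ 2 * r ^ 4) * ((a1 * t * s ^ 2 + a2 * u * r ^ 2) * F2 + (d3 * t ^ 2 * s ^ 8 + d1 * t * s ^ 4 + d0 + d2 * u * r ^ 4 + d4 * u ^ 2 * r ^ 8) * F3)) + ((a1 * t * r ^ 2 + a2 * u * s ^ 2) * ((a1 * t * r ^ 2 + a2 * u * s ^ 2) * F0 + (d3 * t ^ 2 + d1 * t + d0 + d2 * u + d4 * u ^ 2) * F1) + (d3 * t ^ 2 + d1 * t + d0 + d2 * u + d4 * u ^ 2) * ((a1 * t + a2 * u) * F1 + (d3 * t ^ 2 * s ^ 4 + d1 * t * s ^ 2 + d0 + d2 * u * r ^ 2 + d4 * u ^ 2 * r ^ 4) * F2)))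
      = (s ^ 2 - r ^ 2) ^ 2 * a1 * a2 * ((b1 * t + b2 * u) * F1 + F0) + (-(s - r) ^ 2 * ((r * a1 - s * a2) * (r * b1 - s * b2) + d1 + d2)) * ((a1 * t + a2 * u) * F1 + (d3 * t ^ 2 * s ^ 4 + d1 * t * s ^ 2 + d0 + d2 * u * r ^ 2 + d4 * u ^ 2 * r ^ 4) * F2) + (s - r) * (s ^ 2 - r ^ 2) * (r * a1 * d2 + s * a2 * d1) * F1 := by
  subst hd3 hd4 hd0
  linear_combination (2 * d2 ^ 2 * F2 + 4 * d1 * d2 * F2 + 2 * d1 ^ 2 * F2 + a2 * d1 * F1 - 2 * a2 * b1 * d2 * F2 - 2 * a2 * b1 * d1 * F2 + a2 ^ 2 * b1 * b2 * F2 + a1 * d2 * F1 - 2 * a1 * b2 * d2 * F2 - 2 * a1 * b2 * d1 * F2 + 2 * a1 * a2 * F0 + a1 * a2 * b2 ^ 2 * F2 + a1 * a2 * b1 ^ 2 * F2 + a1 ^ 2 * b1 * b2 * F2 - u * d2 ^ 2 * F2 - u * d1 * d2 * F2 + u * b2 * d2 ^ 2 * F3 + 2 * u * b2 * d1 * d2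 * F3 + u * b2 * d1 ^ 2 * F3 - 2 * u * a2 * d2 * F1 - 2 * u * a2 * d1 * F1 - u * a2 * b1 * d2 * F2 + 2 * u * a2 ^ 2 * b1 * F1 - u * a1 * b2 * d2 * F2 + 4 * u * a1 * a2 * b2 * F1 + u ^ 2 * a2 * d2 * F1 - u ^ 2 * a2 * b2 * d2 * F2 - u ^ 2 * a2 * b2 * d1 * F2 + u ^ 2 * a2 ^ 2 * F0 - u ^ 2 * a2 ^ 2 * b1 * b2 * F2 - u ^ 2 * a1 * a2 * b2 ^ 2 * F2 + 2 * u ^ 3 * a2 ^ 2 * b2 * F1 - t * d1 * d2 * F2 - t * d1 ^ 2 * F2 + t * b1 * d2 ^ 2 * F3 + 2 * t * b1 * d1 * d2 * F3 + t * b1 * d1 ^ 2 * F3 - t * a2 * b1 * d1 * F2 - 2 * t * a1 * d2 * F1 - 2 * t * a1 * d1 * F1 - t * a1 * b2 * d1 * F2 + 4 * t * a1 * a2 * b1 * F1 + 2 * t * a1 ^ 2 * b2 * F1 + t * u * a2 * b1 * d2 * F2 + t * u * a2 * b1 * d1 * F2 - t * u * a2 ^ 2 * b1 * b2 * F2 +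 t * u * a1 * b2 * d2 * F2 + t * u * a1 * b2 * d1 * F2 - t * u * a1 * a2 * b2 ^ 2 * F2 - t * u * a1 * a2 * b1 ^ 2 * F2 - t * u * a1 ^ 2 * b1 * b2 * F2 + t * u ^ 2 * a2 * b1 * d2 * F2 + t * u ^ 2 * a1 * b2 * d2 * F2 + t * u ^ 3 * a2 ^ 2 * b1 * b2 * F2 + t * u ^ 3 * a1 * a2 * b2 ^ 2 * F2 + t ^ 2 * a1 * d1 * F1 - t ^ 2 * a1 * b1 * d2 * F2 - t ^ 2 * a1 * b1 * d1 * F2 - t ^ 2 * a1 * a2 * b1 ^ 2 * F2 + t ^ 2 * a1 ^ 2 * F0 - t ^ 2 * a1 ^ 2 * b1 * b2 * F2 + t ^ 2 * u * a2 * b1 * d1 * F2 + t ^ 2 * u * a1 * b2 * d1 * F2 + 2 * t ^ 3 * a1 ^ 2 * b1 * F1 + t ^ 3 * u * a1 * a2 * b1 ^ 2 * F2 + t ^ 3 * u * a1 ^ 2 * b1 * b2 * F2 - r ^ 2 * a2 * d1 * F1 + r ^ 2 * a2 * b1 * d2 * F2 + r ^ 2 * a2 * b1 * d1 * F2 + r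 ^ 2 * a1 * d2 * F1 + r ^ 2 * a1 * b2 * d2 * F2 + r ^ 2 * a1 * b2 * d1 * F2 + 4 * r ^ 2 * a1 * b1 * d2 * F2 + 4 * r ^ 2 * a1 * b1 * d1 * F2 - 2 * r ^ 2 * a1 * a2 * b1 ^ 2 * F2 - 2 * r ^ 2 * a1 ^ 2 * b1 * b2 * F2 - 2 * r ^ 2 * u * d2 ^ 2 * F2 - 2 * r ^ 2 * u * d1 * d2 * F2 + 2 * r ^ 2 * u * a2 * b1 * d2 * F2 - r ^ 2 * u * a2 ^ 2 * b1 * F1 + 2 * r ^ 2 * u * a1 * b2 * d2 * F2 - r ^ 2 * u * a1 * b1 * d2 * F2 + 2 * r ^ 2 * u * a1 * b1 * b2 * d2 * F3 + 2 * r ^ 2 * u * a1 * b1 * b2 * d1 * F3 - r ^ 2 * u * a1 * a2 * b2 * F1 - 2 * r ^ 2 * u * a1 * a2 * b1 * F1 + r ^ 2 * u ^ 2 * d2 ^ 2 * F2 - r ^ 2 * u ^ 2 * b2 * d2 ^ 2 * F3 - r ^ 2 * u ^ 2 * b2 * d1 * d2 * F3 - r ^ 2 * u ^ 2 * a2 *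 b2 * d2 * F2 - r ^ 2 * u ^ 2 * a2 * b2 * d1 * F2 + 2 * r ^ 2 * u ^ 2 * a2 ^ 2 * b1 * b2 * F2 + 2 * r ^ 2 * u ^ 2 * a1 * a2 * b2 ^ 2 * F2 - r ^ 2 * u ^ 2 * a1 * a2 * b1 * b2 * F2 + r ^ 2 * u ^ 3 * a2 * b2 * d2 * F2 - r ^ 2 * u ^ 3 * a2 ^ 2 * b2 * F1 - r ^ 2 * t * a1 * b1 * d1 * F2 + 2 * r ^ 2 * t * a1 * b1 ^ 2 * d2 * F3 + 2 * r ^ 2 * t * a1 * b1 ^ 2 * d1 * F3 - r ^ 2 * t * a1 * a2 * b1 * F1 - r ^ 2 * t * a1 ^ 2 * b2 * F1 - 2 * r ^ 2 * t * a1 ^ 2 * b1 * F1 + r ^ 2 * t * u * d1 * d2 * F2 - r ^ 2 * t * u * b1 * d2 ^ 2 * F3 - r ^ 2 * t * u * b1 * d1 * d2 * F3 - r ^ 2 * t * u * a2 * b1 * d2 * F2 - r ^ 2 * t * u * a2 * b1 * d1 * F2 - r ^ 2 * t * u * a1 * b2 * d2 * F2 - r ^ 2 * t * u * a1 * b2 *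 d1 * F2 + r ^ 2 * t * u * a1 * a2 * b1 ^ 2 * F2 + r ^ 2 * t * u * a1 ^ 2 * b1 * b2 * F2 - r ^ 2 * t * u ^ 2 * a2 * b1 * d2 * F2 - r ^ 2 * t * u ^ 2 * a1 * b2 * d2 * F2 - r ^ 2 * t * u ^ 2 * a1 * a2 * b2 * F1 - 2 * r ^ 2 * t * u ^ 3 * a2 ^ 2 * b1 * b2 * F2 - 2 * r ^ 2 * t * u ^ 3 * a1 * a2 * b2 ^ 2 * F2 - r ^ 2 * t ^ 2 * a1 ^ 2 * b1 ^ 2 * F2 + r ^ 2 * t ^ 2 * u * a1 * b1 * d2 * F2 + r ^ 4 * a1 * a2 * b1 ^ 2 * F2 + r ^ 4 * a1 ^ 2 * b1 * b2 * F2 + 2 * r ^ 4 * a1 ^ 2 * b1 ^ 2 * F2 - r ^ 4 * u * a2 * b1 * d2 * F2 - r ^ 4 * u * a1 * b2 * d2 * F2 - 2 * r ^ 4 * u * a1 * b1 * d2 * F2 + r ^ 4 * u * a1 ^ 2 * b1 ^ 2 * b2 * F3 - r ^ 4 * u ^ 2 * b2 * d2 ^ 2 * F3 - r ^ 4 * u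 ^ 2 * b2 * d1 * d2 * F3 - r ^ 4 * u ^ 2 * a2 * b2 * d2 * F2 - r ^ 4 * u ^ 2 * a2 * b2 * d1 * F2 - r ^ 4 * u ^ 2 * a2 ^ 2 * b1 * b2 * F2 - r ^ 4 * u ^ 2 * a1 * b1 * b2 * d2 * F3 - r ^ 4 * u ^ 2 * a1 * a2 * b2 ^ 2 * F2 - r ^ 4 * u ^ 2 * a1 * a2 * b1 * b2 * F2 + r ^ 4 * u ^ 3 * a2 * b2 * d2 * F2 + r ^ 4 * t * a1 ^ 2 * b1 ^ 3 * F3 - r ^ 4 * t * u * b1 * d2 ^ 2 * F3 - r ^ 4 * t * u * b1 * d1 * d2 * F3 - r ^ 4 * t * u * a1 * b1 ^ 2 * d2 * F3 - r ^ 4 * t * u * a1 * a2 * b1 ^ 2 * F2 - r ^ 4 * t * u * a1 ^ 2 * b1 * b2 * F2 + r ^ 4 * t * u ^ 2 * a2 * b1 * d2 * F2 + r ^ 4 * t * u ^ 2 * a1 * b2 * d2 * F2 + r ^ 4 * t * u ^ 2 * a1 * a2 * b2 * F1 + r ^ 4 * t * u ^ 3 * a2 ^ 2 * b1 * b2 *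 F2 + r ^ 4 * t * u ^ 3 * a1 * a2 * b2 ^ 2 * F2 + r ^ 6 * u ^ 2 * a2 * b2 * d2 * F2 + r ^ 6 * u ^ 2 * a2 * b2 * d1 * F2 - r ^ 6 * u ^ 2 * a1 * b1 * b2 * d2 * F3 - r ^ 6 * u ^ 2 * a1 * a2 * b1 * b2 * F2 + r ^ 6 * u ^ 3 * b2 * d2 ^ 2 * F3 + r ^ 6 * u ^ 3 * a2 * b2 * d2 * F2 - r ^ 6 * t * u * a1 * b1 ^ 2 * d2 * F3 + r ^ 6 * t * u ^ 2 * b1 * d2 ^ 2 * F3 + r ^ 8 * u ^ 2 * a1 * a2 * b1 * b2 * F2 - r ^ 8 * u ^ 3 * a2 * b2 * d2 * F2 + s * r * a2 * d1 * F1 - 2 * s * r * a2 * b1 * d2 * F2 - 2 * s * r * a2 * b1 * d1 * F2 + s * r * a2 ^ 2 * b1 * b2 * F2 + s * r * a1 * d2 * F1 - 2 * s * r * a1 * b2 * d2 * F2 - 2 * s * r * a1 * b2 * d1 * F2 + 2 * s * r * a1 * a2 * F0 + s * r * a1 * a2 * b2 ^ 2 * F2 + s * r * a1 * a2 * b1 ^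 2 * F2 + s * r * a1 ^ 2 * b1 * b2 * F2 - s * r * u * d2 ^ 2 * F2 - s * r * u * d1 * d2 * F2 + s * r * u * b2 * d2 ^ 2 * F3 + 2 * s * r * u * b2 * d1 * d2 * F3 + s * r * u * b2 * d1 ^ 2 * F3 - s * r * u * a2 * b1 * d2 * F2 + 2 * s * r * u * a2 ^ 2 * b1 * F1 - s * r * u * a1 * b2 * d2 * F2 + 4 * s * r * u * a1 * a2 * b2 * F1 + s * r * u ^ 2 * a2 * d2 * F1 - s * r * u ^ 2 * a2 * b2 * d2 * F2 - s * r * u ^ 2 * a2 * b2 * d1 * F2 + s * r * u ^ 2 * a2 ^ 2 * F0 - s * r * u ^ 2 * a2 ^ 2 * b1 * b2 * F2 - s * r * u ^ 2 * a1 * a2 * b2 ^ 2 * F2 + 2 * s * r * u ^ 3 * a2 ^ 2 * b2 * F1 - s * r * t * d1 * d2 * F2 - s * r * t * d1 ^ 2 * F2 + s * r * t * b1 * d2 ^ 2 * F3 + 2 * s * r * t * b1 * d1 * d2 * F3 + s * r * t * b1 * d1 ^ 2 * F3 - s * r * t * a2 * b1 * d1 * F2 - s * r * t * a1 * b2 *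 d1 * F2 + 4 * s * r * t * a1 * a2 * b1 * F1 + 2 * s * r * t * a1 ^ 2 * b2 * F1 + s * r * t * u * a2 * b1 * d2 * F2 + s * r * t * u * a2 * b1 * d1 * F2 - s * r * t * u * a2 ^ 2 * b1 * b2 * F2 + s * r * t * u * a1 * b2 * d2 * F2 + s * r * t * u * a1 * b2 * d1 * F2 - s * r * t * u * a1 * a2 * b2 ^ 2 * F2 - s * r * t * u * a1 * a2 * b1 ^ 2 * F2 - s * r * t * u * a1 ^ 2 * b1 * b2 * F2 + s * r * t * u ^ 2 * a2 * b1 * d2 * F2 + s * r * t * u ^ 2 * a1 * b2 * d2 * F2 + s * r * t * u ^ 3 * a2 ^ 2 * b1 * b2 * F2 + s * r * t * u ^ 3 * a1 * a2 * b2 ^ 2 * F2 + s * r * t ^ 2 * a1 * d1 * F1 - s * r * t ^ 2 * a1 * b1 * d2 * F2 - s * r * t ^ 2 * a1 * b1 * d1 * F2 - s * r * t ^ 2 * a1 * a2 * b1 ^ 2 * F2 + s * r * t ^ 2 * a1 ^ 2 * F0 - s * r * t ^ 2 * a1 ^ 2 * b1 * b2 * F2 + s * r * t ^ 2 * u * a2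 * b1 * d1 * F2 + s * r * t ^ 2 * u * a1 * b2 * d1 * F2 + 2 * s * r * t ^ 3 * a1 ^ 2 * b1 * F1 + s * r * t ^ 3 * u * a1 * a2 * b1 ^ 2 * F2 + s * r * t ^ 3 * u * a1 ^ 2 * b1 * b2 * F2 - 2 * s * r ^ 3 * a1 * a2 * b1 ^ 2 * F2 - 2 * s * r ^ 3 * a1 ^ 2 * b1 * b2 * F2 + 2 * s * r ^ 3 * u * a2 * b1 * d2 * F2 + 2 * s * r ^ 3 * u * a1 * b2 * d2 * F2 - s * r ^ 3 * u * a1 * b1 * d2 * F2 + 2 * s * r ^ 3 * u * a1 * b1 * b2 * d2 * F3 + 2 * s * r ^ 3 * u * a1 * b1 * b2 * d1 * F3 + s * r ^ 3 * u ^ 2 * d2 ^ 2 * F2 - s * r ^ 3 * u ^ 2 * b2 * d2 ^ 2 * F3 - s * r ^ 3 * u ^ 2 * b2 * d1 * d2 * F3 - s * r ^ 3 * u ^ 2 * a2 * b2 * d2 * F2 - s * r ^ 3 * u ^ 2 * a2 * b2 * d1 * F2 + 2 * s * r ^ 3 * u ^ 2 * a2 ^ 2 * b1 * b2 * F2 +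 2 * s * r ^ 3 * u ^ 2 * a1 * a2 * b2 ^ 2 * F2 - s * r ^ 3 * u ^ 2 * a1 * a2 * b1 * b2 * F2 + s * r ^ 3 * u ^ 3 * a2 * b2 * d2 * F2 - s * r ^ 3 * u ^ 3 * a2 ^ 2 * b2 * F1 - s * r ^ 3 * t * a1 * b1 * d1 * F2 + 2 * s * r ^ 3 * t * a1 * b1 ^ 2 * d2 * F3 + 2 * s * r ^ 3 * t * a1 * b1 ^ 2 * d1 * F3 + s * r ^ 3 * t * u * d1 * d2 * F2 - s * r ^ 3 * t * u * b1 * d2 ^ 2 * F3 - s * r ^ 3 * t * u * b1 * d1 * d2 * F3 - s * r ^ 3 * t * u * a2 * b1 * d2 * F2 - s * r ^ 3 * t * u * a2 * b1 * d1 * F2 - s * r ^ 3 * t * u * a1 * b2 * d2 * F2 - s * r ^ 3 * t * u * a1 * b2 * d1 * F2 + s * r ^ 3 * t * u * a1 * a2 * b1 ^ 2 * F2 + s * r ^ 3 * t * u * a1 ^ 2 * b1 * b2 * F2 - s * r ^ 3 * t * u ^ 2 * a2 * b1 * d2 * F2 - s * r ^ 3 * t * u ^ 2 * a1 * b2 *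 d2 * F2 - s * r ^ 3 * t * u ^ 2 * a1 * a2 * b2 * F1 - 2 * s * r ^ 3 * t * u ^ 3 * a2 ^ 2 * b1 * b2 * F2 - 2 * s * r ^ 3 * t * u ^ 3 * a1 * a2 * b2 ^ 2 * F2 - s * r ^ 3 * t ^ 2 * a1 ^ 2 * b1 ^ 2 * F2 + s * r ^ 3 * t ^ 2 * u * a1 * b1 * d2 * F2 + s * r ^ 5 * u * a1 ^ 2 * b1 ^ 2 * b2 * F3 - s * r ^ 5 * u ^ 2 * b2 * d2 ^ 2 * F3 - s * r ^ 5 * u ^ 2 * b2 * d1 * d2 * F3 - s * r ^ 5 * u ^ 2 * a2 * b2 * d2 * F2 - s * r ^ 5 * u ^ 2 * a2 * b2 * d1 * F2 - s * r ^ 5 * u ^ 2 * a2 ^ 2 * b1 * b2 * F2 - s * r ^ 5 * u ^ 2 * a1 * b1 * b2 * d2 * F3 - s * r ^ 5 * u ^ 2 * a1 * a2 * b2 ^ 2 * F2 - s * r ^ 5 * u ^ 2 * a1 * a2 * b1 * b2 * F2 + s * r ^ 5 * u ^ 3 * a2 * b2 * d2 * F2 + s * r ^ 5 * t * a1 ^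 2 * b1 ^ 3 * F3 - s * r ^ 5 * t * u * b1 * d2 ^ 2 * F3 - s * r ^ 5 * t * u * b1 * d1 * d2 * F3 - s * r ^ 5 * t * u * a1 * b1 ^ 2 * d2 * F3 - s * r ^ 5 * t * u * a1 * a2 * b1 ^ 2 * F2 - s * r ^ 5 * t * u * a1 ^ 2 * b1 * b2 * F2 + s * r ^ 5 * t * u ^ 2 * a2 * b1 * d2 * F2 + s * r ^ 5 * t * u ^ 2 * a1 * b2 * d2 * F2 + s * r ^ 5 * t * u ^ 2 * a1 * a2 * b2 * F1 + s * r ^ 5 * t * u ^ 3 * a2 ^ 2 * b1 * b2 * F2 + s * r ^ 5 * t * u ^ 3 * a1 * a2 * b2 ^ 2 * F2 + s * r ^ 7 * u ^ 2 * a2 * b2 * d2 * F2 + s * r ^ 7 * u ^ 2 * a2 * b2 * d1 * F2 - s * r ^ 7 * u ^ 2 * a1 * b1 * b2 * d2 * F3 - s * r ^ 7 * u ^ 2 * a1 * a2 * b1 * b2 * F2 + s * r ^ 7 * u ^ 3 * b2 * d2 ^ 2 * F3 + s * r ^ 7 * u ^ 3 * a2 * b2 * d2 * F2 - s * r ^ 7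 * t * u * a1 * b1 ^ 2 * d2 * F3 + s * r ^ 7 * t * u ^ 2 * b1 * d2 ^ 2 * F3 + s * r ^ 9 * u ^ 2 * a1 * a2 * b1 * b2 * F2 - s * r ^ 9 * u ^ 3 * a2 * b2 * d2 * F2 + s ^ 2 * a2 * d1 * F1 + 4 * s ^ 2 * a2 * b2 * d2 * F2 + 4 * s ^ 2 * a2 * b2 * d1 * F2 + s ^ 2 * a2 * b1 * d2 * F2 + s ^ 2 * a2 * b1 * d1 * F2 - 2 * s ^ 2 * a2 ^ 2 * b1 * b2 * F2 - s ^ 2 * a1 * d2 * F1 + s ^ 2 * a1 * b2 * d2 * F2 + s ^ 2 * a1 * b2 * d1 * F2 - 2 * s ^ 2 * a1 * a2 * b2 ^ 2 * F2 - s ^ 2 * u * a2 * b2 * d2 * F2 + 2 * s ^ 2 * u * a2 * b2 ^ 2 * d2 * F3 + 2 * s ^ 2 * u * a2 * b2 ^ 2 * d1 * F3 - 2 * s ^ 2 * u * a2 ^ 2 * b2 * F1 - s ^ 2 * u * a2 ^ 2 * b1 * F1 - s ^ 2 * u * a1 * a2 * b2 * F1 - s ^ 2 * u ^ 2 * a2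 ^ 2 * b2 ^ 2 * F2 - 2 * s ^ 2 * t * d1 * d2 * F2 - 2 * s ^ 2 * t * d1 ^ 2 * F2 - s ^ 2 * t * a2 * b2 * d1 * F2 + 2 * s ^ 2 * t * a2 * b1 * d1 * F2 + 2 * s ^ 2 * t * a2 * b1 * b2 * d2 * F3 + 2 * s ^ 2 * t * a2 * b1 * b2 * d1 * F3 + 2 * s ^ 2 * t * a1 * b2 * d1 * F2 - 2 * s ^ 2 * t * a1 * a2 * b2 * F1 - s ^ 2 * t * a1 * a2 * b1 * F1 - s ^ 2 * t * a1 ^ 2 * b2 * F1 + s ^ 2 * t * u * d1 * d2 * F2 - s ^ 2 * t * u * b2 * d1 * d2 * F3 - s ^ 2 * t * u * b2 * d1 ^ 2 * F3 - s ^ 2 * t * u * a2 * b1 * d2 * F2 - s ^ 2 * t * u * a2 * b1 * d1 * F2 + s ^ 2 * t * u * a2 ^ 2 * b1 * b2 * F2 - s ^ 2 * t * u * a1 * b2 * d2 * F2 - s ^ 2 * t * u * a1 * b2 * d1 * F2 + s ^ 2 * t * u * a1 * a2 * b2 ^ 2 * F2 + s ^ 2 * t * u ^ 2 * a2 * b2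 * d1 * F2 + s ^ 2 * t ^ 2 * d1 ^ 2 * F2 - s ^ 2 * t ^ 2 * b1 * d1 * d2 * F3 - s ^ 2 * t ^ 2 * b1 * d1 ^ 2 * F3 - s ^ 2 * t ^ 2 * a1 * b1 * d2 * F2 - s ^ 2 * t ^ 2 * a1 * b1 * d1 * F2 - s ^ 2 * t ^ 2 * a1 * a2 * b1 * b2 * F2 + 2 * s ^ 2 * t ^ 2 * a1 * a2 * b1 ^ 2 * F2 + 2 * s ^ 2 * t ^ 2 * a1 ^ 2 * b1 * b2 * F2 - s ^ 2 * t ^ 2 * u * a2 * b1 * d1 * F2 - s ^ 2 * t ^ 2 * u * a1 * b2 * d1 * F2 - s ^ 2 * t ^ 2 * u * a1 * a2 * b1 * F1 + s ^ 2 * t ^ 3 * a1 * b1 * d1 * F2 - s ^ 2 * t ^ 3 * a1 ^ 2 * b1 * F1 - 2 * s ^ 2 * t ^ 3 * u * a1 * a2 * b1 ^ 2 * F2 - 2 * s ^ 2 * t ^ 3 * u * a1 ^ 2 * b1 * b2 * F2 + s ^ 2 * r ^ 2 * a2 ^ 2 * b1 * b2 * F2 + s ^ 2 * r ^ 2 *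 a1 * a2 * b2 ^ 2 * F2 + 4 * s ^ 2 * r ^ 2 * a1 * a2 * b1 * b2 * F2 + s ^ 2 * r ^ 2 * a1 * a2 * b1 ^ 2 * F2 + s ^ 2 * r ^ 2 * a1 ^ 2 * b1 * b2 * F2 - 2 * s ^ 2 * r ^ 2 * u * a2 * b2 * d2 * F2 - s ^ 2 * r ^ 2 * u * a2 * b1 * d2 * F2 - s ^ 2 * r ^ 2 * u * a1 * b2 * d2 * F2 + 2 * s ^ 2 * r ^ 2 * u * a1 * a2 * b1 * b2 ^ 2 * F3 - s ^ 2 * r ^ 2 * u ^ 2 * a2 * b2 * d2 * F2 - s ^ 2 * r ^ 2 * u ^ 2 * a2 * b2 * d1 * F2 - s ^ 2 * r ^ 2 * u ^ 2 * a2 * b2 ^ 2 * d2 * F3 - s ^ 2 * r ^ 2 * u ^ 2 * a2 ^ 2 * b2 ^ 2 * F2 - s ^ 2 * r ^ 2 * u ^ 2 * a2 ^ 2 * b1 * b2 * F2 - s ^ 2 * r ^ 2 * u ^ 2 * a1 * a2 * b2 ^ 2 * F2 + s ^ 2 * r ^ 2 * u ^ 3 * a2 ^ 2 * b2 * F1 -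 s ^ 2 * r ^ 2 * t * a2 * b1 * d1 * F2 - s ^ 2 * r ^ 2 * t * a1 * b2 * d1 * F2 - 2 * s ^ 2 * r ^ 2 * t * a1 * b1 * d1 * F2 + 2 * s ^ 2 * r ^ 2 * t * a1 * a2 * b1 ^ 2 * b2 * F3 - s ^ 2 * r ^ 2 * t * u * a2 * b1 * b2 * d2 * F3 - s ^ 2 * r ^ 2 * t * u * a2 ^ 2 * b1 * b2 * F2 - s ^ 2 * r ^ 2 * t * u * a1 * b1 * b2 * d1 * F3 - s ^ 2 * r ^ 2 * t * u * a1 * a2 * b2 ^ 2 * F2 - s ^ 2 * r ^ 2 * t * u * a1 * a2 * b1 ^ 2 * F2 - s ^ 2 * r ^ 2 * t * u * a1 ^ 2 * b1 * b2 * F2 + s ^ 2 * r ^ 2 * t * u ^ 2 * a2 * b2 * d1 * F2 + s ^ 2 * r ^ 2 * t * u ^ 2 * a2 * b1 * d2 * F2 + s ^ 2 * r ^ 2 * t * u ^ 2 * a1 * b2 * d2 * F2 + s ^ 2 * r ^ 2 * t * u ^ 3 * a2 ^ 2 * b1 * b2 * F2 + s ^ 2 * r ^ 2 * t * u ^ 3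 * a1 * a2 * b2 ^ 2 * F2 - s ^ 2 * r ^ 2 * t ^ 2 * a1 * b1 * d2 * F2 - s ^ 2 * r ^ 2 * t ^ 2 * a1 * b1 * d1 * F2 - s ^ 2 * r ^ 2 * t ^ 2 * a1 * b1 ^ 2 * d1 * F3 - s ^ 2 * r ^ 2 * t ^ 2 * a1 * a2 * b1 ^ 2 * F2 - s ^ 2 * r ^ 2 * t ^ 2 * a1 ^ 2 * b1 * b2 * F2 - s ^ 2 * r ^ 2 * t ^ 2 * a1 ^ 2 * b1 ^ 2 * F2 + s ^ 2 * r ^ 2 * t ^ 2 * u * a2 * b1 * d1 * F2 + s ^ 2 * r ^ 2 * t ^ 2 * u * a1 * b2 * d1 * F2 + s ^ 2 * r ^ 2 * t ^ 2 * u * a1 * b1 * d2 * F2 + s ^ 2 * r ^ 2 * t ^ 3 * a1 ^ 2 * b1 * F1 + s ^ 2 * r ^ 2 * t ^ 3 * u * a1 * a2 * b1 ^ 2 * F2 + s ^ 2 * r ^ 2 * t ^ 3 * u * a1 ^ 2 * b1 * b2 * F2 - 2 * s ^ 2 * r ^ 4 * u ^ 2 * a2 * b2 * d2 * F2 - 2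 * s ^ 2 * r ^ 4 * u ^ 2 * a2 * b2 * d1 * F2 - s ^ 2 * r ^ 4 * u ^ 2 * a2 * b2 ^ 2 * d2 * F3 - s ^ 2 * r ^ 4 * u ^ 2 * a2 ^ 2 * b2 ^ 2 * F2 + 2 * s ^ 2 * r ^ 4 * u ^ 2 * a2 ^ 2 * b1 * b2 * F2 + 2 * s ^ 2 * r ^ 4 * u ^ 2 * a1 * a2 * b2 ^ 2 * F2 - s ^ 2 * r ^ 4 * u ^ 2 * a1 * a2 * b1 * b2 * F2 + 2 * s ^ 2 * r ^ 4 * u ^ 3 * a2 * b2 * d2 * F2 - s ^ 2 * r ^ 4 * u ^ 3 * a2 * b2 ^ 2 * d2 * F3 - s ^ 2 * r ^ 4 * u ^ 3 * a2 * b2 ^ 2 * d1 * F3 + s ^ 2 * r ^ 4 * u ^ 4 * a2 ^ 2 * b2 ^ 2 * F2 - s ^ 2 * r ^ 4 * t * u * a2 * b1 * b2 * d2 * F3 + s ^ 2 * r ^ 4 * t * u ^ 2 * b2 * d1 * d2 * F3 + 2 * s ^ 2 * r ^ 4 * t * u ^ 2 * a2 * b2 * d1 * F2 - s ^ 2 *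 r ^ 4 * t * u ^ 2 * a2 * b1 * b2 * d2 * F3 - s ^ 2 * r ^ 4 * t * u ^ 2 * a2 * b1 * b2 * d1 * F3 - s ^ 2 * r ^ 4 * t * u ^ 3 * a2 ^ 2 * b1 * b2 * F2 - s ^ 2 * r ^ 4 * t * u ^ 3 * a1 * a2 * b2 ^ 2 * F2 - s ^ 2 * r ^ 4 * t ^ 2 * a1 ^ 2 * b1 ^ 2 * F2 + s ^ 2 * r ^ 4 * t ^ 2 * u * b1 * d1 * d2 * F3 + s ^ 2 * r ^ 4 * t ^ 2 * u * a1 * b1 * d2 * F2 + s ^ 2 * r ^ 4 * t ^ 2 * u ^ 2 * a1 * a2 * b1 * b2 * F2 + s ^ 2 * r ^ 6 * u ^ 2 * a2 ^ 2 * b2 ^ 2 * F2 - s ^ 2 * r ^ 6 * u ^ 2 * a2 ^ 2 * b1 * b2 * F2 - s ^ 2 * r ^ 6 * u ^ 2 * a1 * a2 * b2 ^ 2 * F2 - 2 * s ^ 2 * r ^ 6 * u ^ 2 * a1 * a2 * b1 * b2 * F2 - s ^ 2 * r ^ 6 * u ^ 3 * a1 * a2 * b1 * b2 ^ 2 * F3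 + s ^ 2 * r ^ 6 * u ^ 4 * a2 ^ 2 * b2 ^ 2 * F2 - s ^ 2 * r ^ 6 * t * u ^ 2 * a2 * b2 * d1 * F2 - s ^ 2 * r ^ 6 * t * u ^ 2 * a1 * a2 * b1 ^ 2 * b2 * F3 + s ^ 2 * r ^ 6 * t * u ^ 3 * a2 ^ 2 * b1 * b2 * F2 + s ^ 2 * r ^ 6 * t * u ^ 3 * a1 * a2 * b2 ^ 2 * F2 - s ^ 2 * r ^ 8 * u ^ 3 * a2 * b2 ^ 2 * d2 * F3 - s ^ 2 * r ^ 8 * u ^ 3 * a2 * b2 ^ 2 * d1 * F3 + s ^ 2 * r ^ 8 * u ^ 4 * a2 * b2 ^ 2 * d2 * F3 + s ^ 2 * r ^ 8 * u ^ 4 * a2 ^ 2 * b2 ^ 2 * F2 - s ^ 2 * r ^ 8 * t * u ^ 2 * a2 * b1 * b2 * d2 * F3 - s ^ 2 * r ^ 8 * t * u ^ 2 * a2 * b1 * b2 * d1 * F3 + s ^ 2 * r ^ 8 * t * u ^ 3 * a2 * b1 * b2 * d2 * F3 - s ^ 2 * r ^ 10 * u ^ 3 * a1 * a2 * b1 *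 b2 ^ 2 * F3 + s ^ 2 * r ^ 10 * u ^ 4 * a2 * b2 ^ 2 * d2 * F3 - s ^ 2 * r ^ 10 * u ^ 4 * a2 ^ 2 * b2 ^ 2 * F2 - s ^ 2 * r ^ 10 * t * u ^ 2 * a1 * a2 * b1 ^ 2 * b2 * F3 + s ^ 2 * r ^ 10 * t * u ^ 3 * a2 * b1 * b2 * d2 * F3 - 2 * s ^ 3 * r * a2 ^ 2 * b1 * b2 * F2 - 2 * s ^ 3 * r * a1 * a2 * b2 ^ 2 * F2 - s ^ 3 * r * u * a2 * b2 * d2 * F2 + 2 * s ^ 3 * r * u * a2 * b2 ^ 2 * d2 * F3 + 2 * s ^ 3 * r * u * a2 * b2 ^ 2 * d1 * F3 - s ^ 3 * r * u ^ 2 * a2 ^ 2 * b2 ^ 2 * F2 - s ^ 3 * r * t * a2 * b2 * d1 * F2 + 2 * s ^ 3 * r * t * a2 * b1 * d1 * F2 + 2 * s ^ 3 * r * t * a2 * b1 * b2 * d2 * F3 + 2 * s ^ 3 * r * t * a2 * b1 * b2 * d1 * F3 + 2 * s ^ 3 * r * t * a1 * b2 * d1 * F2 + s ^ 3 * r * t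 * u * d1 * d2 * F2 - s ^ 3 * r * t * u * b2 * d1 * d2 * F3 - s ^ 3 * r * t * u * b2 * d1 ^ 2 * F3 - s ^ 3 * r * t * u * a2 * b1 * d2 * F2 - s ^ 3 * r * t * u * a2 * b1 * d1 * F2 + s ^ 3 * r * t * u * a2 ^ 2 * b1 * b2 * F2 - s ^ 3 * r * t * u * a1 * b2 * d2 * F2 - s ^ 3 * r * t * u * a1 * b2 * d1 * F2 + s ^ 3 * r * t * u * a1 * a2 * b2 ^ 2 * F2 + s ^ 3 * r * t * u ^ 2 * a2 * b2 * d1 * F2 + s ^ 3 * r * t ^ 2 * d1 ^ 2 * F2 - s ^ 3 * r * t ^ 2 * b1 * d1 * d2 * F3 - s ^ 3 * r * t ^ 2 * b1 * d1 ^ 2 * F3 - s ^ 3 * r * t ^ 2 * a1 * b1 * d2 * F2 - s ^ 3 * r * t ^ 2 * a1 * b1 * d1 * F2 - s ^ 3 * r * t ^ 2 * a1 * a2 * b1 * b2 * F2 + 2 * s ^ 3 * r * t ^ 2 * a1 * a2 * b1 ^ 2 * F2 + 2 * s ^ 3 * r * t ^ 2 * a1 ^ 2 * b1 * b2 * F2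 - s ^ 3 * r * t ^ 2 * u * a2 * b1 * d1 * F2 - s ^ 3 * r * t ^ 2 * u * a1 * b2 * d1 * F2 - s ^ 3 * r * t ^ 2 * u * a1 * a2 * b1 * F1 + s ^ 3 * r * t ^ 3 * a1 * b1 * d1 * F2 - s ^ 3 * r * t ^ 3 * a1 ^ 2 * b1 * F1 - 2 * s ^ 3 * r * t ^ 3 * u * a1 * a2 * b1 ^ 2 * F2 - 2 * s ^ 3 * r * t ^ 3 * u * a1 ^ 2 * b1 * b2 * F2 + 2 * s ^ 3 * r ^ 3 * u * a1 * a2 * b1 * b2 ^ 2 * F3 - s ^ 3 * r ^ 3 * u ^ 2 * a2 * b2 * d2 * F2 - s ^ 3 * r ^ 3 * u ^ 2 * a2 * b2 * d1 * F2 - s ^ 3 * r ^ 3 * u ^ 2 * a2 * b2 ^ 2 * d2 * F3 - s ^ 3 * r ^ 3 * u ^ 2 * a2 ^ 2 * b2 ^ 2 * F2 - s ^ 3 * r ^ 3 * u ^ 2 * a2 ^ 2 * b1 * b2 * F2 - s ^ 3 * r ^ 3 * u ^ 2 * a1 * a2 * b2 ^ 2 * F2 + s ^ 3 * r ^ 3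 * u ^ 3 * a2 ^ 2 * b2 * F1 + 2 * s ^ 3 * r ^ 3 * t * a1 * a2 * b1 ^ 2 * b2 * F3 - s ^ 3 * r ^ 3 * t * u * a2 * b1 * b2 * d2 * F3 - s ^ 3 * r ^ 3 * t * u * a2 ^ 2 * b1 * b2 * F2 - s ^ 3 * r ^ 3 * t * u * a1 * b1 * b2 * d1 * F3 - s ^ 3 * r ^ 3 * t * u * a1 * a2 * b2 ^ 2 * F2 - s ^ 3 * r ^ 3 * t * u * a1 * a2 * b1 ^ 2 * F2 - s ^ 3 * r ^ 3 * t * u * a1 ^ 2 * b1 * b2 * F2 + s ^ 3 * r ^ 3 * t * u ^ 2 * a2 * b2 * d1 * F2 + s ^ 3 * r ^ 3 * t * u ^ 2 * a2 * b1 * d2 * F2 + s ^ 3 * r ^ 3 * t * u ^ 2 * a1 * b2 * d2 * F2 + s ^ 3 * r ^ 3 * t * u ^ 3 * a2 ^ 2 * b1 * b2 * F2 + s ^ 3 * r ^ 3 * t * u ^ 3 * a1 * a2 * b2 ^ 2 * F2 - s ^ 3 * r ^ 3 * t ^ 2 * a1 * b1 * d2 * F2 - s ^ 3 * r ^ 3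 * t ^ 2 * a1 * b1 * d1 * F2 - s ^ 3 * r ^ 3 * t ^ 2 * a1 * b1 ^ 2 * d1 * F3 - s ^ 3 * r ^ 3 * t ^ 2 * a1 * a2 * b1 ^ 2 * F2 - s ^ 3 * r ^ 3 * t ^ 2 * a1 ^ 2 * b1 * b2 * F2 - s ^ 3 * r ^ 3 * t ^ 2 * a1 ^ 2 * b1 ^ 2 * F2 + s ^ 3 * r ^ 3 * t ^ 2 * u * a2 * b1 * d1 * F2 + s ^ 3 * r ^ 3 * t ^ 2 * u * a1 * b2 * d1 * F2 + s ^ 3 * r ^ 3 * t ^ 2 * u * a1 * b1 * d2 * F2 + s ^ 3 * r ^ 3 * t ^ 3 * a1 ^ 2 * b1 * F1 + s ^ 3 * r ^ 3 * t ^ 3 * u * a1 * a2 * b1 ^ 2 * F2 + s ^ 3 * r ^ 3 * t ^ 3 * u * a1 ^ 2 * b1 * b2 * F2 - s ^ 3 * r ^ 5 * u ^ 2 * a2 * b2 ^ 2 * d2 * F3 - s ^ 3 * r ^ 5 * u ^ 2 * a2 ^ 2 * b2 ^ 2 * F2 + 2 * s ^ 3 * r ^ 5 * u ^ 2 * a2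 ^ 2 * b1 * b2 * F2 + 2 * s ^ 3 * r ^ 5 * u ^ 2 * a1 * a2 * b2 ^ 2 * F2 - s ^ 3 * r ^ 5 * u ^ 2 * a1 * a2 * b1 * b2 * F2 + 2 * s ^ 3 * r ^ 5 * u ^ 3 * a2 * b2 * d2 * F2 - s ^ 3 * r ^ 5 * u ^ 3 * a2 * b2 ^ 2 * d2 * F3 - s ^ 3 * r ^ 5 * u ^ 3 * a2 * b2 ^ 2 * d1 * F3 + s ^ 3 * r ^ 5 * u ^ 4 * a2 ^ 2 * b2 ^ 2 * F2 - s ^ 3 * r ^ 5 * t * u * a2 * b1 * b2 * d2 * F3 + s ^ 3 * r ^ 5 * t * u ^ 2 * b2 * d1 * d2 * F3 + 2 * s ^ 3 * r ^ 5 * t * u ^ 2 * a2 * b2 * d1 * F2 - s ^ 3 * r ^ 5 * t * u ^ 2 * a2 * b1 * b2 * d2 * F3 - s ^ 3 * r ^ 5 * t * u ^ 2 * a2 * b1 * b2 * d1 * F3 - s ^ 3 * r ^ 5 * t * u ^ 3 * a2 ^ 2 * b1 * b2 * F2 - s ^ 3 * r ^ 5 * t * u ^ 3 * a1 * a2 *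 b2 ^ 2 * F2 - s ^ 3 * r ^ 5 * t ^ 2 * a1 ^ 2 * b1 ^ 2 * F2 + s ^ 3 * r ^ 5 * t ^ 2 * u * b1 * d1 * d2 * F3 + s ^ 3 * r ^ 5 * t ^ 2 * u * a1 * b1 * d2 * F2 + s ^ 3 * r ^ 5 * t ^ 2 * u ^ 2 * a1 * a2 * b1 * b2 * F2 + s ^ 3 * r ^ 7 * u ^ 2 * a2 ^ 2 * b2 ^ 2 * F2 - s ^ 3 * r ^ 7 * u ^ 3 * a1 * a2 * b1 * b2 ^ 2 * F3 + s ^ 3 * r ^ 7 * u ^ 4 * a2 ^ 2 * b2 ^ 2 * F2 - s ^ 3 * r ^ 7 * t * u ^ 2 * a2 * b2 * d1 * F2 - s ^ 3 * r ^ 7 * t * u ^ 2 * a1 * a2 * b1 ^ 2 * b2 * F3 + s ^ 3 * r ^ 7 * t * u ^ 3 * a2 ^ 2 * b1 * b2 * F2 + s ^ 3 * r ^ 7 * t * u ^ 3 * a1 * a2 * b2 ^ 2 * F2 - s ^ 3 * r ^ 9 * u ^ 3 * a2 * b2 ^ 2 * d2 * F3 - s ^ 3 * r ^ 9 * u ^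 3 * a2 * b2 ^ 2 * d1 * F3 + s ^ 3 * r ^ 9 * u ^ 4 * a2 * b2 ^ 2 * d2 * F3 + s ^ 3 * r ^ 9 * u ^ 4 * a2 ^ 2 * b2 ^ 2 * F2 - s ^ 3 * r ^ 9 * t * u ^ 2 * a2 * b1 * b2 * d2 * F3 - s ^ 3 * r ^ 9 * t * u ^ 2 * a2 * b1 * b2 * d1 * F3 + s ^ 3 * r ^ 9 * t * u ^ 3 * a2 * b1 * b2 * d2 * F3 - s ^ 3 * r ^ 11 * u ^ 3 * a1 * a2 * b1 * b2 ^ 2 * F3 + s ^ 3 * r ^ 11 * u ^ 4 * a2 * b2 ^ 2 * d2 * F3 - s ^ 3 * r ^ 11 * u ^ 4 * a2 ^ 2 * b2 ^ 2 * F2 - s ^ 3 * r ^ 11 * t * u ^ 2 * a1 * a2 * b1 ^ 2 * b2 * F3 + s ^ 3 * r ^ 11 * t * u ^ 3 * a2 * b1 * b2 * d2 * F3 + 2 * s ^ 4 * a2 ^ 2 * b2 ^ 2 * F2 + s ^ 4 * a2 ^ 2 * b1 * b2 * F2 + s ^ 4 * a1 * a2 * b2 ^ 2 * F2 + s ^ 4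 * u * a2 ^ 2 * b2 ^ 3 * F3 - 2 * s ^ 4 * t * a2 * b2 * d1 * F2 - s ^ 4 * t * a2 * b1 * d1 * F2 + s ^ 4 * t * a2 ^ 2 * b1 * b2 ^ 2 * F3 - s ^ 4 * t * a1 * b2 * d1 * F2 - s ^ 4 * t * u * b2 * d1 * d2 * F3 - s ^ 4 * t * u * b2 * d1 ^ 2 * F3 - s ^ 4 * t * u * a2 * b2 ^ 2 * d1 * F3 - s ^ 4 * t * u * a2 ^ 2 * b1 * b2 * F2 - s ^ 4 * t * u * a1 * a2 * b2 ^ 2 * F2 - s ^ 4 * t ^ 2 * b1 * d1 * d2 * F3 - s ^ 4 * t ^ 2 * b1 * d1 ^ 2 * F3 - s ^ 4 * t ^ 2 * a2 * b1 * b2 * d1 * F3 - s ^ 4 * t ^ 2 * a1 * b1 * d2 * F2 - s ^ 4 * t ^ 2 * a1 * b1 * d1 * F2 - s ^ 4 * t ^ 2 * a1 * a2 * b1 * b2 * F2 - s ^ 4 * t ^ 2 * a1 * a2 * b1 ^ 2 * F2 - s ^ 4 * t ^ 2 * a1 ^ 2 * b1 * b2 * F2 + s ^ 4 * t ^ 2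 * u * a2 * b1 * d1 * F2 + s ^ 4 * t ^ 2 * u * a1 * b2 * d1 * F2 + s ^ 4 * t ^ 2 * u * a1 * a2 * b1 * F1 + s ^ 4 * t ^ 3 * a1 * b1 * d1 * F2 + s ^ 4 * t ^ 3 * u * a1 * a2 * b1 ^ 2 * F2 + s ^ 4 * t ^ 3 * u * a1 ^ 2 * b1 * b2 * F2 - s ^ 4 * r ^ 2 * u ^ 2 * a2 ^ 2 * b2 ^ 2 * F2 - s ^ 4 * r ^ 2 * t * u * a1 * b1 * b2 * d1 * F3 + s ^ 4 * r ^ 2 * t * u ^ 2 * b2 * d1 * d2 * F3 + s ^ 4 * r ^ 2 * t * u ^ 2 * a2 * b2 * d1 * F2 - 2 * s ^ 4 * r ^ 2 * t ^ 2 * a1 * b1 * d2 * F2 - 2 * s ^ 4 * r ^ 2 * t ^ 2 * a1 * b1 * d1 * F2 - s ^ 4 * r ^ 2 * t ^ 2 * a1 * b1 ^ 2 * d1 * F3 - s ^ 4 * r ^ 2 * t ^ 2 * a1 * a2 * b1 * b2 * F2 + 2 * s ^ 4 * r ^ 2 * t ^ 2 * a1 * a2 * b1 ^ 2 * F2 +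 2 * s ^ 4 * r ^ 2 * t ^ 2 * a1 ^ 2 * b1 * b2 * F2 - s ^ 4 * r ^ 2 * t ^ 2 * a1 ^ 2 * b1 ^ 2 * F2 + s ^ 4 * r ^ 2 * t ^ 2 * u * b1 * d1 * d2 * F3 + 2 * s ^ 4 * r ^ 2 * t ^ 2 * u * a1 * b1 * d2 * F2 - s ^ 4 * r ^ 2 * t ^ 2 * u * a1 * b1 * b2 * d2 * F3 - s ^ 4 * r ^ 2 * t ^ 2 * u * a1 * b1 * b2 * d1 * F3 + s ^ 4 * r ^ 2 * t ^ 2 * u ^ 2 * a1 * a2 * b1 * b2 * F2 + 2 * s ^ 4 * r ^ 2 * t ^ 3 * a1 * b1 * d1 * F2 - s ^ 4 * r ^ 2 * t ^ 3 * a1 * b1 ^ 2 * d2 * F3 - s ^ 4 * r ^ 2 * t ^ 3 * a1 * b1 ^ 2 * d1 * F3 - s ^ 4 * r ^ 2 * t ^ 3 * u * a1 * a2 * b1 ^ 2 * F2 - s ^ 4 * r ^ 2 * t ^ 3 * u * a1 ^ 2 * b1 * b2 * F2 + s ^ 4 * r ^ 2 * t ^ 4 * a1 ^ 2 * b1 ^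 2 * F2 - 2 * s ^ 4 * r ^ 4 * u ^ 2 * a2 ^ 2 * b2 ^ 2 * F2 - s ^ 4 * r ^ 4 * u ^ 2 * a2 ^ 2 * b1 * b2 * F2 - s ^ 4 * r ^ 4 * u ^ 2 * a1 * a2 * b2 ^ 2 * F2 - s ^ 4 * r ^ 4 * u ^ 3 * a2 ^ 2 * b2 ^ 3 * F3 - s ^ 4 * r ^ 4 * t * u ^ 2 * a2 ^ 2 * b1 * b2 ^ 2 * F3 + s ^ 4 * r ^ 4 * t * u ^ 3 * a2 ^ 2 * b1 * b2 * F2 + s ^ 4 * r ^ 4 * t * u ^ 3 * a1 * a2 * b2 ^ 2 * F2 - s ^ 4 * r ^ 4 * t ^ 2 * a1 * a2 * b1 ^ 2 * F2 - s ^ 4 * r ^ 4 * t ^ 2 * a1 ^ 2 * b1 * b2 * F2 - 2 * s ^ 4 * r ^ 4 * t ^ 2 * a1 ^ 2 * b1 ^ 2 * F2 - s ^ 4 * r ^ 4 * t ^ 2 * u * a1 ^ 2 * b1 ^ 2 * b2 * F3 + 2 * s ^ 4 * r ^ 4 * t ^ 2 * u ^ 2 * a1 * a2 * b1 * b2 *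 F2 - s ^ 4 * r ^ 4 * t ^ 3 * a1 ^ 2 * b1 ^ 3 * F3 + s ^ 4 * r ^ 4 * t ^ 3 * u * a1 * a2 * b1 ^ 2 * F2 + s ^ 4 * r ^ 4 * t ^ 3 * u * a1 ^ 2 * b1 * b2 * F2 + s ^ 4 * r ^ 6 * u ^ 4 * a2 ^ 2 * b2 ^ 2 * F2 + s ^ 4 * r ^ 6 * t ^ 2 * u ^ 2 * a1 * b1 * b2 * d2 * F3 + 2 * s ^ 4 * r ^ 6 * t ^ 2 * u ^ 2 * a1 * a2 * b1 * b2 * F2 + s ^ 4 * r ^ 6 * t ^ 3 * u * a1 * b1 ^ 2 * d2 * F3 - s ^ 4 * r ^ 8 * u ^ 3 * a2 ^ 2 * b2 ^ 3 * F3 - s ^ 4 * r ^ 8 * t * u ^ 2 * a2 ^ 2 * b1 * b2 ^ 2 * F3 + s ^ 4 * r ^ 8 * t * u ^ 3 * a2 * b2 ^ 2 * d1 * F3 + s ^ 4 * r ^ 8 * t ^ 2 * u ^ 2 * a2 * b1 * b2 * d1 * F3 - s ^ 4 * r ^ 8 * t ^ 2 * u ^ 2 * a1 * a2 * b1 * b2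 * F2 + s ^ 4 * r ^ 12 * u ^ 5 * a2 ^ 2 * b2 ^ 3 * F3 + s ^ 4 * r ^ 12 * t * u ^ 4 * a2 ^ 2 * b1 * b2 ^ 2 * F3 + s ^ 5 * r * u * a2 ^ 2 * b2 ^ 3 * F3 + s ^ 5 * r * t * a2 ^ 2 * b1 * b2 ^ 2 * F3 - s ^ 5 * r * t * u * b2 * d1 * d2 * F3 - s ^ 5 * r * t * u * b2 * d1 ^ 2 * F3 - s ^ 5 * r * t * u * a2 * b2 ^ 2 * d1 * F3 - s ^ 5 * r * t * u * a2 ^ 2 * b1 * b2 * F2 - s ^ 5 * r * t * u * a1 * a2 * b2 ^ 2 * F2 - s ^ 5 * r * t ^ 2 * b1 * d1 * d2 * F3 - s ^ 5 * r * t ^ 2 * b1 * d1 ^ 2 * F3 - s ^ 5 * r * t ^ 2 * a2 * b1 * b2 * d1 * F3 - s ^ 5 * r * t ^ 2 * a1 * b1 * d2 * F2 - s ^ 5 * r * t ^ 2 * a1 * b1 * d1 * F2 - s ^ 5 * r * t ^ 2 * a1 * a2 * b1 * b2 * F2 - s ^ 5 * r * t ^ 2 * a1 * a2 * b1 ^ 2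 * F2 - s ^ 5 * r * t ^ 2 * a1 ^ 2 * b1 * b2 * F2 + s ^ 5 * r * t ^ 2 * u * a2 * b1 * d1 * F2 + s ^ 5 * r * t ^ 2 * u * a1 * b2 * d1 * F2 + s ^ 5 * r * t ^ 2 * u * a1 * a2 * b1 * F1 + s ^ 5 * r * t ^ 3 * a1 * b1 * d1 * F2 + s ^ 5 * r * t ^ 3 * u * a1 * a2 * b1 ^ 2 * F2 + s ^ 5 * r * t ^ 3 * u * a1 ^ 2 * b1 * b2 * F2 - s ^ 5 * r ^ 3 * u ^ 2 * a2 ^ 2 * b2 ^ 2 * F2 - s ^ 5 * r ^ 3 * t * u * a1 * b1 * b2 * d1 * F3 + s ^ 5 * r ^ 3 * t * u ^ 2 * b2 * d1 * d2 * F3 + s ^ 5 * r ^ 3 * t * u ^ 2 * a2 * b2 * d1 * F2 - s ^ 5 * r ^ 3 * t ^ 2 * a1 * b1 ^ 2 * d1 * F3 - s ^ 5 * r ^ 3 * t ^ 2 * a1 * a2 * b1 * b2 * F2 + 2 * s ^ 5 * r ^ 3 * t ^ 2 * a1 * a2 * b1 ^ 2 * F2 + 2 * s ^ 5 * r ^ 3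 * t ^ 2 * a1 ^ 2 * b1 * b2 * F2 - s ^ 5 * r ^ 3 * t ^ 2 * a1 ^ 2 * b1 ^ 2 * F2 + s ^ 5 * r ^ 3 * t ^ 2 * u * b1 * d1 * d2 * F3 + 2 * s ^ 5 * r ^ 3 * t ^ 2 * u * a1 * b1 * d2 * F2 - s ^ 5 * r ^ 3 * t ^ 2 * u * a1 * b1 * b2 * d2 * F3 - s ^ 5 * r ^ 3 * t ^ 2 * u * a1 * b1 * b2 * d1 * F3 + s ^ 5 * r ^ 3 * t ^ 2 * u ^ 2 * a1 * a2 * b1 * b2 * F2 + 2 * s ^ 5 * r ^ 3 * t ^ 3 * a1 * b1 * d1 * F2 - s ^ 5 * r ^ 3 * t ^ 3 * a1 * b1 ^ 2 * d2 * F3 - s ^ 5 * r ^ 3 * t ^ 3 * a1 * b1 ^ 2 * d1 * F3 - s ^ 5 * r ^ 3 * t ^ 3 * u * a1 * a2 * b1 ^ 2 * F2 - s ^ 5 * r ^ 3 * t ^ 3 * u * a1 ^ 2 * b1 * b2 * F2 + s ^ 5 * r ^ 3 * t ^ 4 * a1 ^ 2 * b1 ^ 2 * F2 - s ^ 5 *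 r ^ 5 * u ^ 3 * a2 ^ 2 * b2 ^ 3 * F3 - s ^ 5 * r ^ 5 * t * u ^ 2 * a2 ^ 2 * b1 * b2 ^ 2 * F3 + s ^ 5 * r ^ 5 * t * u ^ 3 * a2 ^ 2 * b1 * b2 * F2 + s ^ 5 * r ^ 5 * t * u ^ 3 * a1 * a2 * b2 ^ 2 * F2 - s ^ 5 * r ^ 5 * t ^ 2 * u * a1 ^ 2 * b1 ^ 2 * b2 * F3 + 2 * s ^ 5 * r ^ 5 * t ^ 2 * u ^ 2 * a1 * a2 * b1 * b2 * F2 - s ^ 5 * r ^ 5 * t ^ 3 * a1 ^ 2 * b1 ^ 3 * F3 + s ^ 5 * r ^ 5 * t ^ 3 * u * a1 * a2 * b1 ^ 2 * F2 + s ^ 5 * r ^ 5 * t ^ 3 * u * a1 ^ 2 * b1 * b2 * F2 + s ^ 5 * r ^ 7 * u ^ 4 * a2 ^ 2 * b2 ^ 2 * F2 + s ^ 5 * r ^ 7 * t ^ 2 * u ^ 2 * a1 * b1 * b2 * d2 * F3 + 2 * s ^ 5 * r ^ 7 * t ^ 2 * u ^ 2 * a1 * a2 * b1 * b2 * F2 +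 s ^ 5 * r ^ 7 * t ^ 3 * u * a1 * b1 ^ 2 * d2 * F3 - s ^ 5 * r ^ 9 * u ^ 3 * a2 ^ 2 * b2 ^ 3 * F3 - s ^ 5 * r ^ 9 * t * u ^ 2 * a2 ^ 2 * b1 * b2 ^ 2 * F3 + s ^ 5 * r ^ 9 * t * u ^ 3 * a2 * b2 ^ 2 * d1 * F3 + s ^ 5 * r ^ 9 * t ^ 2 * u ^ 2 * a2 * b1 * b2 * d1 * F3 - s ^ 5 * r ^ 9 * t ^ 2 * u ^ 2 * a1 * a2 * b1 * b2 * F2 + s ^ 5 * r ^ 13 * u ^ 5 * a2 ^ 2 * b2 ^ 3 * F3 + s ^ 5 * r ^ 13 * t * u ^ 4 * a2 ^ 2 * b1 * b2 ^ 2 * F3 - s ^ 6 * t * u * a2 * b2 ^ 2 * d1 * F3 - s ^ 6 * t ^ 2 * a2 * b1 * b2 * d1 * F3 + s ^ 6 * t ^ 2 * a1 * b1 * d2 * F2 + s ^ 6 * t ^ 2 * a1 * b1 * d1 * F2 - s ^ 6 * t ^ 2 * a1 * a2 * b1 * b2 * F2 + s ^ 6 * t ^ 2 * u * b2 * d1 ^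 2 * F3 + s ^ 6 * t ^ 3 * b1 * d1 ^ 2 * F3 + s ^ 6 * t ^ 3 * a1 * b1 * d1 * F2 - 2 * s ^ 6 * r ^ 2 * t ^ 2 * a1 * a2 * b1 * b2 * F2 - s ^ 6 * r ^ 2 * t ^ 2 * a1 * a2 * b1 ^ 2 * F2 - s ^ 6 * r ^ 2 * t ^ 2 * a1 ^ 2 * b1 * b2 * F2 + s ^ 6 * r ^ 2 * t ^ 2 * a1 ^ 2 * b1 ^ 2 * F2 - s ^ 6 * r ^ 2 * t ^ 2 * u * a1 * b1 * d2 * F2 - s ^ 6 * r ^ 2 * t ^ 2 * u * a1 * a2 * b1 * b2 ^ 2 * F3 - s ^ 6 * r ^ 2 * t ^ 3 * a1 * a2 * b1 ^ 2 * b2 * F3 + s ^ 6 * r ^ 2 * t ^ 3 * u * a1 * a2 * b1 ^ 2 * F2 + s ^ 6 * r ^ 2 * t ^ 3 * u * a1 ^ 2 * b1 * b2 * F2 + s ^ 6 * r ^ 2 * t ^ 4 * a1 ^ 2 * b1 ^ 2 * F2 + s ^ 6 * r ^ 4 * t * u ^ 3 * a2 * b2 ^ 2 * d1 * F3 + s ^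 6 * r ^ 4 * t ^ 2 * u ^ 2 * a2 * b1 * b2 * d1 * F3 + 2 * s ^ 6 * r ^ 4 * t ^ 2 * u ^ 2 * a1 * a2 * b1 * b2 * F2 + s ^ 6 * r ^ 4 * t ^ 4 * a1 ^ 2 * b1 ^ 2 * F2 + s ^ 6 * r ^ 10 * t ^ 2 * u ^ 3 * a1 * a2 * b1 * b2 ^ 2 * F3 + s ^ 6 * r ^ 10 * t ^ 3 * u ^ 2 * a1 * a2 * b1 ^ 2 * b2 * F3 - s ^ 7 * r * t * u * a2 * b2 ^ 2 * d1 * F3 - s ^ 7 * r * t ^ 2 * a2 * b1 * b2 * d1 * F3 + s ^ 7 * r * t ^ 2 * a1 * b1 * d2 * F2 + s ^ 7 * r * t ^ 2 * a1 * b1 * d1 * F2 - s ^ 7 * r * t ^ 2 * a1 * a2 * b1 * b2 * F2 + s ^ 7 * r * t ^ 2 * u * b2 * d1 ^ 2 * F3 + s ^ 7 * r * t ^ 3 * b1 * d1 ^ 2 * F3 + s ^ 7 * r * t ^ 3 * a1 * b1 * d1 * F2 + s ^ 7 * r ^ 3 * t ^ 2 * a1 ^ 2 * b1 ^ 2 *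 F2 - s ^ 7 * r ^ 3 * t ^ 2 * u * a1 * b1 * d2 * F2 - s ^ 7 * r ^ 3 * t ^ 2 * u * a1 * a2 * b1 * b2 ^ 2 * F3 - s ^ 7 * r ^ 3 * t ^ 3 * a1 * a2 * b1 ^ 2 * b2 * F3 + s ^ 7 * r ^ 3 * t ^ 3 * u * a1 * a2 * b1 ^ 2 * F2 + s ^ 7 * r ^ 3 * t ^ 3 * u * a1 ^ 2 * b1 * b2 * F2 + s ^ 7 * r ^ 3 * t ^ 4 * a1 ^ 2 * b1 ^ 2 * F2 + s ^ 7 * r ^ 5 * t * u ^ 3 * a2 * b2 ^ 2 * d1 * F3 + s ^ 7 * r ^ 5 * t ^ 2 * u ^ 2 * a2 * b1 * b2 * d1 * F3 + 2 * s ^ 7 * r ^ 5 * t ^ 2 * u ^ 2 * a1 * a2 * b1 * b2 * F2 + s ^ 7 * r ^ 5 * t ^ 4 * a1 ^ 2 * b1 ^ 2 * F2 + s ^ 7 * r ^ 11 * t ^ 2 * u ^ 3 * a1 * a2 * b1 * b2 ^ 2 * F3 + s ^ 7 * r ^ 11 * t ^ 3 * u ^ 2 * a1 * a2 * b1 ^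 2 * b2 * F3 + s ^ 8 * t ^ 2 * a1 * a2 * b1 * b2 * F2 - s ^ 8 * t ^ 3 * a1 * b1 * d1 * F2 - s ^ 8 * r ^ 2 * t ^ 2 * u * a1 * b1 * b2 * d2 * F3 - s ^ 8 * r ^ 2 * t ^ 2 * u * a1 * b1 * b2 * d1 * F3 - s ^ 8 * r ^ 2 * t ^ 3 * a1 * b1 ^ 2 * d2 * F3 - s ^ 8 * r ^ 2 * t ^ 3 * a1 * b1 ^ 2 * d1 * F3 + s ^ 8 * r ^ 2 * t ^ 3 * u * a1 * b1 * b2 * d1 * F3 + s ^ 8 * r ^ 2 * t ^ 4 * a1 * b1 ^ 2 * d1 * F3 + s ^ 8 * r ^ 2 * t ^ 4 * a1 ^ 2 * b1 ^ 2 * F2 - s ^ 8 * r ^ 4 * t ^ 2 * u * a1 ^ 2 * b1 ^ 2 * b2 * F3 + s ^ 8 * r ^ 4 * t ^ 2 * u ^ 2 * a1 * b1 * b2 * d2 * F3 - s ^ 8 * r ^ 4 * t ^ 2 * u ^ 2 * a1 * a2 * b1 * b2 * F2 - s ^ 8 * r ^ 4 * t ^ 3 * a1 ^ 2 * b1 ^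 3 * F3 + s ^ 8 * r ^ 4 * t ^ 3 * u * a1 * b1 ^ 2 * d2 * F3 + s ^ 9 * r * t ^ 2 * a1 * a2 * b1 * b2 * F2 - s ^ 9 * r * t ^ 3 * a1 * b1 * d1 * F2 - s ^ 9 * r ^ 3 * t ^ 2 * u * a1 * b1 * b2 * d2 * F3 - s ^ 9 * r ^ 3 * t ^ 2 * u * a1 * b1 * b2 * d1 * F3 - s ^ 9 * r ^ 3 * t ^ 3 * a1 * b1 ^ 2 * d2 * F3 - s ^ 9 * r ^ 3 * t ^ 3 * a1 * b1 ^ 2 * d1 * F3 + s ^ 9 * r ^ 3 * t ^ 3 * u * a1 * b1 * b2 * d1 * F3 + s ^ 9 * r ^ 3 * t ^ 4 * a1 * b1 ^ 2 * d1 * F3 + s ^ 9 * r ^ 3 * t ^ 4 * a1 ^ 2 * b1 ^ 2 * F2 - s ^ 9 * r ^ 5 * t ^ 2 * u * a1 ^ 2 * b1 ^ 2 * b2 * F3 + s ^ 9 * r ^ 5 * t ^ 2 * u ^ 2 * a1 * b1 * b2 * d2 * F3 - s ^ 9 * r ^ 5 * t ^ 2 * u ^ 2 * a1 * a2 * b1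 * b2 * F2 - s ^ 9 * r ^ 5 * t ^ 3 * a1 ^ 2 * b1 ^ 3 * F3 + s ^ 9 * r ^ 5 * t ^ 3 * u * a1 * b1 ^ 2 * d2 * F3 - s ^ 10 * r ^ 2 * t ^ 2 * u * a1 * a2 * b1 * b2 ^ 2 * F3 - s ^ 10 * r ^ 2 * t ^ 3 * a1 * a2 * b1 ^ 2 * b2 * F3 + s ^ 10 * r ^ 2 * t ^ 3 * u * a1 * b1 * b2 * d1 * F3 + s ^ 10 * r ^ 2 * t ^ 4 * a1 * b1 ^ 2 * d1 * F3 - s ^ 10 * r ^ 2 * t ^ 4 * a1 ^ 2 * b1 ^ 2 * F2 + s ^ 10 * r ^ 6 * t ^ 2 * u ^ 3 * a1 * a2 * b1 * b2 ^ 2 * F3 + s ^ 10 * r ^ 6 * t ^ 3 * u ^ 2 * a1 * a2 * b1 ^ 2 * b2 * F3 - s ^ 11 * r ^ 3 * t ^ 2 * u * a1 * a2 * b1 * b2 ^ 2 * F3 - s ^ 11 * r ^ 3 * t ^ 3 * a1 * a2 * b1 ^ 2 * b2 * F3 + s ^ 11 * r ^ 3 * t ^ 3 * u * a1 * b1 *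 b2 * d1 * F3 + s ^ 11 * r ^ 3 * t ^ 4 * a1 * b1 ^ 2 * d1 * F3 - s ^ 11 * r ^ 3 * t ^ 4 * a1 ^ 2 * b1 ^ 2 * F2 + s ^ 11 * r ^ 7 * t ^ 2 * u ^ 3 * a1 * a2 * b1 * b2 ^ 2 * F3 + s ^ 11 * r ^ 7 * t ^ 3 * u ^ 2 * a1 * a2 * b1 ^ 2 * b2 * F3 + s ^ 12 * r ^ 4 * t ^ 4 * u * a1 ^ 2 * b1 ^ 2 * b2 * F3 + s ^ 12 * r ^ 4 * t ^ 5 * a1 ^ 2 * b1 ^ 3 * F3 + s ^ 13 * r ^ 5 * t ^ 4 * u * a1 ^ 2 * b1 ^ 2 * b2 * F3 + s ^ 13 * r ^ 5 * t ^ 5 * a1 ^ 2 * b1 ^ 3 * F3) * hsr + (-a2 * d1 * F1 + 2 * a2 * b1 * d2 * F2 + 2 * a2 * b1 * d1 * F2 - a2 ^ 2 * b1 * b2 * F2 - a1 * d2 * F1 + 2 * a1 * b2 * d2 * F2 + 2 * a1 * b2 * d1 * F2 - 2 * a1 * a2 * F0 - a1 * a2 * b2 ^ 2 * F2 - a1 *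 a2 * b1 ^ 2 * F2 - a1 ^ 2 * b1 * b2 * F2 + u * a2 * b1 * d2 * F2 - 2 * u * a2 ^ 2 * b1 * F1 + u * a1 * b2 * d2 * F2 - 4 * u * a1 * a2 * b2 * F1 + u ^ 2 * a2 ^ 2 * b1 * b2 * F2 + u ^ 2 * a1 * a2 * b2 ^ 2 * F2 + t * a2 * b1 * d1 * F2 + t * a1 * b2 * d1 * F2 - 4 * t * a1 * a2 * b1 * F1 - 2 * t * a1 ^ 2 * b2 * F1 + t ^ 2 * a1 * a2 * b1 ^ 2 * F2 + t ^ 2 * a1 ^ 2 * b1 * b2 * F2 + r ^ 2 * a2 * d1 * F1 - r ^ 2 * a2 * b1 * d2 * F2 - r ^ 2 * a2 * b1 * d1 * F2 - r ^ 2 * a1 * d2 * F1 - r ^ 2 * a1 * b2 * d2 * F2 - r ^ 2 * a1 * b2 * d1 * F2 + 2 * r ^ 2 * a1 * a2 * b1 ^ 2 * F2 + 2 * r ^ 2 * a1 ^ 2 * b1 * b2 * F2 - 2 * r ^ 2 * u * a2 * b1 * d2 * F2 + r ^ 2 * u * a2 ^ 2 * b1 * F1 - 2 * r ^ 2 * u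 * a1 * b2 * d2 * F2 + r ^ 2 * u * a1 * a2 * b2 * F1 - 2 * r ^ 2 * u ^ 2 * a2 ^ 2 * b1 * b2 * F2 - 2 * r ^ 2 * u ^ 2 * a1 * a2 * b2 ^ 2 * F2 + r ^ 2 * t * a1 * a2 * b1 * F1 + r ^ 2 * t * a1 ^ 2 * b2 * F1 + r ^ 4 * a1 * d2 * F1 + r ^ 4 * a1 * a2 * F0 - r ^ 4 * a1 * a2 * b1 ^ 2 * F2 - r ^ 4 * a1 ^ 2 * b1 * b2 * F2 + r ^ 4 * u * a2 * b1 * d2 * F2 + r ^ 4 * u * a1 * b2 * d2 * F2 + r ^ 4 * u * a1 * a2 * b2 * F1 + r ^ 4 * u ^ 2 * a2 ^ 2 * b1 * b2 * F2 + r ^ 4 * u ^ 2 * a1 * a2 * b2 ^ 2 * F2 + r ^ 4 * t * a1 * a2 * b1 * F1 - s ^ 2 * a2 * d1 * F1 - s ^ 2 * a2 * b1 * d2 * F2 - s ^ 2 * a2 * b1 * d1 * F2 + 2 * s ^ 2 * a2 ^ 2 * b1 * b2 * F2 + s ^ 2 * a1 * d2 * F1 - s ^ 2 * a1 * b2 *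 d2 * F2 - s ^ 2 * a1 * b2 * d1 * F2 + 2 * s ^ 2 * a1 * a2 * b2 ^ 2 * F2 + s ^ 2 * u * a2 ^ 2 * b1 * F1 + s ^ 2 * u * a1 * a2 * b2 * F1 - 2 * s ^ 2 * t * a2 * b1 * d1 * F2 - 2 * s ^ 2 * t * a1 * b2 * d1 * F2 + s ^ 2 * t * a1 * a2 * b1 * F1 + s ^ 2 * t * a1 ^ 2 * b2 * F1 - 2 * s ^ 2 * t ^ 2 * a1 * a2 * b1 ^ 2 * F2 - 2 * s ^ 2 * t ^ 2 * a1 ^ 2 * b1 * b2 * F2 + s ^ 4 * a2 * d1 * F1 - s ^ 4 * a2 ^ 2 * b1 * b2 * F2 + s ^ 4 * a1 * a2 * F0 - s ^ 4 * a1 * a2 * b2 ^ 2 * F2 + s ^ 4 * u * a1 * a2 * b2 * F1 + s ^ 4 * t * a2 * b1 * d1 * F2 + s ^ 4 * t * a1 * b2 * d1 * F2 + s ^ 4 * t * a1 * a2 * b1 * F1 + s ^ 4 * t ^ 2 * a1 * a2 * b1 ^ 2 * F2 + s ^ 4 * t ^ 2 * a1 ^ 2 * b1 * b2 * F2) * 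htu

lemma master0 {F : Type*} [Field F] (s r a1 a2 b1 b2 d0 d1 d2 d3 d4 F1 F2 F3 : F)
    (hsr : s * r = 1)
    (hd3 : d3 = r ^ 2 * a1 * b1) (hd4 : d4 = s ^ 2 * a2 * b2)
    (hd0 : d0 = -(d1 + d2 + d3 + d4)) :
    (s ^ 2 + r ^ 2) * ((a1 + a2) * ((b1 + b2) * ((a1 + a2) * F1 + (d3 * s ^ 4 + d1 * s ^ 2 + d0 + d2 * r ^ 2 + d4 * r ^ 4) * F2)) + (d3 * s ^ 4 + d1 * s ^ 2 + d0 + d2 * r ^ 2 + d4 * r ^ 4) * ((b1 * s ^ 2 + b2 * r ^ 2) * ((a1 * s ^ 2 + a2 * r ^ 2) * F2 + (d3 * s ^ 8 + d1 * s ^ 4 + d0 + d2 * r ^ 4 + d4 * r ^ 8) * F3) + ((a1 + a2) * F1 + (d3 * s ^ 4 + d1 * s ^ 2 + d0 + d2 * r ^ 2 + d4 * r ^ 4) * F2))) - ((a1 + a2) * ((a1 + a2) * ((b1 + b2) * F1) + (d3 * s ^ 4 + d1 * s ^ 2 + d0 + d2 * r ^ 2 + d4 * r ^ 4) * ((b1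 * s ^ 2 + b2 * r ^ 2) * F2 + F1)) + (d3 * s ^ 4 + d1 * s ^ 2 + d0 + d2 * r ^ 2 + d4 * r ^ 4) * ((a1 * s ^ 2 + a2 * r ^ 2) * ((b1 * s ^ 2 + b2 * r ^ 2) * F2 + F1) + (d3 * s ^ 8 + d1 * s ^ 4 + d0 + d2 * r ^ 4 + d4 * r ^ 8) * ((b1 * s ^ 4 + b2 * r ^ 4) * F3 + F2))) - ((b1 + b2) * ((a1 + a2) * ((a1 + a2) * F1 + (d3 * s ^ 4 + d1 * s ^ 2 + d0 + d2 * r ^ 2 + d4 * r ^ 4) * F2) + (d3 * s ^ 4 + d1 * s ^ 2 + d0 + d2 * r ^ 2 + d4 * r ^ 4) * ((a1 * s ^ 2 + a2 * r ^ 2) * F2 + (d3 * s ^ 8 + d1 * s ^ 4 + d0 + d2 * r ^ 4 + d4 * r ^ 8) * F3)))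
      = (s ^ 2 - r ^ 2) ^ 2 * a1 * a2 * ((b1 + b2) * F1) + (-(s - r) ^ 2 * ((r * a1 - s * a2) * (r * b1 - s * b2) + d1 + d2)) * ((a1 + a2) * F1 + (d3 * s ^ 4 + d1 * s ^ 2 + d0 + d2 * r ^ 2 + d4 * r ^ 4) * F2) + (s - r) * (s ^ 2 - r ^ 2) * (r * a1 * d2 + s * a2 * d1) * F1 := by
  subst hd3 hd4 hd0
  linear_combination (d2 ^ 2 * F2 + 2 * d1 * d2 * F2 + d1 ^ 2 * F2 + b2 * d2 ^ 2 * F3 + 2 * b2 * d1 * d2 * F3 + b2 * d1 ^ 2 * F3 + b1 * d2 ^ 2 * F3 + 2 * b1 * d1 * d2 * F3 + b1 * d1 ^ 2 * F3 - a2 * d2 * F1 - a2 * d1 * F1 - a2 * b2 * d2 * F2 - a2 * b2 * d1 * F2 - a2 * b1 * d2 * F2 - a2 * b1 * d1 * F2 + 2 * a2 ^ 2 * b2 * F1 + 2 * a2 ^ 2 * b1 * F1 - a1 * d2 * F1 - a1 * d1 * F1 - a1 * b2 * d2 * F2 - a1 * b2 * d1 * F2 - a1 * b1 * d2 * F2 -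 a1 * b1 * d1 * F2 + 4 * a1 * a2 * b2 * F1 + 4 * a1 * a2 * b1 * F1 + 2 * a1 ^ 2 * b2 * F1 + 2 * a1 ^ 2 * b1 * F1 - r ^ 2 * d2 ^ 2 * F2 - r ^ 2 * d1 * d2 * F2 - r ^ 2 * b2 * d2 ^ 2 * F3 - r ^ 2 * b2 * d1 * d2 * F3 - r ^ 2 * b1 * d2 ^ 2 * F3 - r ^ 2 * b1 * d1 * d2 * F3 - r ^ 2 * a2 * d1 * F1 - r ^ 2 * a2 * b2 * d1 * F2 + r ^ 2 * a2 * b1 * d2 * F2 - r ^ 2 * a2 ^ 2 * b2 * F1 - r ^ 2 * a2 ^ 2 * b1 * F1 + r ^ 2 * a1 * d2 * F1 + r ^ 2 * a1 * b2 * d2 * F2 + 4 * r ^ 2 * a1 * b1 * d2 * F2 + 3 * r ^ 2 * a1 * b1 * d1 * F2 + 2 * r ^ 2 * a1 * b1 * b2 * d2 * F3 + 2 * r ^ 2 * a1 * b1 * b2 * d1 * F3 + 2 * r ^ 2 * a1 * b1 ^ 2 * d2 * F3 + 2 * r ^ 2 * a1 * b1 ^ 2 * d1 * F3 - 2 * r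 ^ 2 * a1 * a2 * b2 * F1 - 3 * r ^ 2 * a1 * a2 * b1 * F1 - r ^ 2 * a1 * a2 * b1 * b2 * F2 - r ^ 2 * a1 * a2 * b1 ^ 2 * F2 - r ^ 2 * a1 ^ 2 * b2 * F1 - 2 * r ^ 2 * a1 ^ 2 * b1 * F1 - r ^ 2 * a1 ^ 2 * b1 * b2 * F2 - r ^ 2 * a1 ^ 2 * b1 ^ 2 * F2 - r ^ 4 * b2 * d2 ^ 2 * F3 - r ^ 4 * b2 * d1 * d2 * F3 - r ^ 4 * b1 * d2 ^ 2 * F3 - r ^ 4 * b1 * d1 * d2 * F3 - r ^ 4 * a2 * b2 * d1 * F2 - 2 * r ^ 4 * a1 * b1 * d2 * F2 - r ^ 4 * a1 * b1 * b2 * d2 * F3 - r ^ 4 * a1 * b1 ^ 2 * d2 * F3 + r ^ 4 * a1 * a2 * b2 * F1 - r ^ 4 * a1 * a2 * b1 * b2 * F2 + 2 * r ^ 4 * a1 ^ 2 * b1 ^ 2 * F2 + r ^ 4 * a1 ^ 2 * b1 ^ 2 * b2 * F3 + r ^ 4 * a1 ^ 2 * b1 ^ 3 * F3 + r ^ 6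 * b2 * d2 ^ 2 * F3 + r ^ 6 * b1 * d2 ^ 2 * F3 + 2 * r ^ 6 * a2 * b2 * d2 * F2 + r ^ 6 * a2 * b2 * d1 * F2 - r ^ 6 * a1 * b1 * b2 * d2 * F3 - r ^ 6 * a1 * b1 ^ 2 * d2 * F3 - r ^ 6 * a1 * a2 * b1 * b2 * F2 - r ^ 8 * a2 * b2 * d2 * F2 + r ^ 8 * a1 * a2 * b1 * b2 * F2 - s * r * d2 ^ 2 * F2 - 2 * s * r * d1 * d2 * F2 - s * r * d1 ^ 2 * F2 + s * r * b2 * d2 ^ 2 * F3 + 2 * s * r * b2 * d1 * d2 * F3 + s * r * b2 * d1 ^ 2 * F3 + s * r * b1 * d2 ^ 2 * F3 + 2 * s * r * b1 * d1 * d2 * F3 + s * r * b1 * d1 ^ 2 * F3 + s * r * a2 * d2 * F1 + s * r * a2 * d1 * F1 - s * r * a2 * b2 * d2 * F2 - s * r * a2 * b2 * d1 * F2 - s * r * a2 * b1 * d2 * F2 - s * r * a2 * b1 * d1 * F2 + 2 * s * r * a2 ^ 2 * b2 * F1 + 2 * s * r * a2 ^ 2 * b1 * F1 + s * r * a1 *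 d2 * F1 + s * r * a1 * d1 * F1 - s * r * a1 * b2 * d2 * F2 - s * r * a1 * b2 * d1 * F2 - s * r * a1 * b1 * d2 * F2 - s * r * a1 * b1 * d1 * F2 + 4 * s * r * a1 * a2 * b2 * F1 + 4 * s * r * a1 * a2 * b1 * F1 + 2 * s * r * a1 ^ 2 * b2 * F1 + 2 * s * r * a1 ^ 2 * b1 * F1 + s * r ^ 3 * d2 ^ 2 * F2 + s * r ^ 3 * d1 * d2 * F2 - s * r ^ 3 * b2 * d2 ^ 2 * F3 - s * r ^ 3 * b2 * d1 * d2 * F3 - s * r ^ 3 * b1 * d2 ^ 2 * F3 - s * r ^ 3 * b1 * d1 * d2 * F3 - s * r ^ 3 * a2 * b2 * d1 * F2 - s * r ^ 3 * a2 * b1 * d1 * F2 - s * r ^ 3 * a2 ^ 2 * b2 * F1 - s * r ^ 3 * a1 * b2 * d1 * F2 - s * r ^ 3 * a1 * b1 * d1 * F2 + 2 * s * r ^ 3 * a1 * b1 * b2 * d2 * F3 + 2 * s * r ^ 3 * a1 * b1 * b2 * d1 * F3 + 2 * s * r ^ 3 * a1 * b1 ^ 2 * d2 * F3 + 2 * s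 * r ^ 3 * a1 * b1 ^ 2 * d1 * F3 - s * r ^ 3 * a1 * a2 * b2 * F1 - s * r ^ 3 * a1 * a2 * b1 * b2 * F2 - s * r ^ 3 * a1 * a2 * b1 ^ 2 * F2 - s * r ^ 3 * a1 ^ 2 * b1 * b2 * F2 - s * r ^ 3 * a1 ^ 2 * b1 ^ 2 * F2 - s * r ^ 5 * b2 * d2 ^ 2 * F3 - s * r ^ 5 * b2 * d1 * d2 * F3 - s * r ^ 5 * b1 * d2 ^ 2 * F3 - s * r ^ 5 * b1 * d1 * d2 * F3 - s * r ^ 5 * a2 * b2 * d1 * F2 + s * r ^ 5 * a2 * b1 * d2 * F2 + s * r ^ 5 * a1 * b2 * d2 * F2 - s * r ^ 5 * a1 * b1 * b2 * d2 * F3 - s * r ^ 5 * a1 * b1 ^ 2 * d2 * F3 + s * r ^ 5 * a1 * a2 * b2 * F1 - s * r ^ 5 * a1 * a2 * b1 * b2 * F2 - s * r ^ 5 * a1 * a2 * b1 ^ 2 * F2 - s * r ^ 5 * a1 ^ 2 * b1 * b2 * F2 + s * r ^ 5 * a1 ^ 2 * b1 ^ 2 * b2 * F3 + s * r ^ 5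 * a1 ^ 2 * b1 ^ 3 * F3 + s * r ^ 7 * b2 * d2 ^ 2 * F3 + s * r ^ 7 * b1 * d2 ^ 2 * F3 + 2 * s * r ^ 7 * a2 * b2 * d2 * F2 + s * r ^ 7 * a2 * b2 * d1 * F2 - s * r ^ 7 * a1 * b1 * b2 * d2 * F3 - s * r ^ 7 * a1 * b1 ^ 2 * d2 * F3 - s * r ^ 7 * a1 * a2 * b1 * b2 * F2 - s * r ^ 9 * a2 * b2 * d2 * F2 + s * r ^ 9 * a1 * a2 * b1 * b2 * F2 - s ^ 2 * d1 * d2 * F2 - s ^ 2 * d1 ^ 2 * F2 - s ^ 2 * b2 * d1 * d2 * F3 - s ^ 2 * b2 * d1 ^ 2 * F3 - s ^ 2 * b1 * d1 * d2 * F3 - s ^ 2 * b1 * d1 ^ 2 * F3 + s ^ 2 * a2 * d1 * F1 + 3 * s ^ 2 * a2 * b2 * d2 * F2 + 4 * s ^ 2 * a2 * b2 * d1 * F2 + 2 * s ^ 2 * a2 * b2 ^ 2 * d2 * F3 + 2 * s ^ 2 * a2 * b2 ^ 2 * d1 * F3 + s ^ 2 * a2 * b1 * d1 * F2 + 2 *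 s ^ 2 * a2 * b1 * b2 * d2 * F3 + 2 * s ^ 2 * a2 * b1 * b2 * d1 * F3 - 2 * s ^ 2 * a2 ^ 2 * b2 * F1 - s ^ 2 * a2 ^ 2 * b2 ^ 2 * F2 - s ^ 2 * a2 ^ 2 * b1 * F1 - s ^ 2 * a2 ^ 2 * b1 * b2 * F2 - s ^ 2 * a1 * d2 * F1 + s ^ 2 * a1 * b2 * d1 * F2 - s ^ 2 * a1 * b1 * d2 * F2 - 3 * s ^ 2 * a1 * a2 * b2 * F1 - s ^ 2 * a1 * a2 * b2 ^ 2 * F2 - 2 * s ^ 2 * a1 * a2 * b1 * F1 - s ^ 2 * a1 * a2 * b1 * b2 * F2 - s ^ 2 * a1 ^ 2 * b2 * F1 - s ^ 2 * a1 ^ 2 * b1 * F1 - 3 * s ^ 2 * r ^ 2 * a2 * b2 * d2 * F2 - s ^ 2 * r ^ 2 * a2 * b2 ^ 2 * d2 * F3 - s ^ 2 * r ^ 2 * a2 * b1 * b2 * d2 * F3 + s ^ 2 * r ^ 2 * a2 ^ 2 * b2 * F1 - s ^ 2 * r ^ 2 * a2 ^ 2 * b2 ^ 2 * F2 - 3 *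 s ^ 2 * r ^ 2 * a1 * b1 * d1 * F2 - s ^ 2 * r ^ 2 * a1 * b1 * b2 * d1 * F3 - s ^ 2 * r ^ 2 * a1 * b1 ^ 2 * d1 * F3 + 4 * s ^ 2 * r ^ 2 * a1 * a2 * b1 * b2 * F2 + 2 * s ^ 2 * r ^ 2 * a1 * a2 * b1 * b2 ^ 2 * F3 + 2 * s ^ 2 * r ^ 2 * a1 * a2 * b1 ^ 2 * b2 * F3 + s ^ 2 * r ^ 2 * a1 ^ 2 * b1 * F1 - s ^ 2 * r ^ 2 * a1 ^ 2 * b1 ^ 2 * F2 + s ^ 2 * r ^ 4 * b2 * d1 * d2 * F3 + s ^ 2 * r ^ 4 * b1 * d1 * d2 * F3 - 2 * s ^ 2 * r ^ 4 * a2 * b2 ^ 2 * d2 * F3 - s ^ 2 * r ^ 4 * a2 * b2 ^ 2 * d1 * F3 - 2 * s ^ 2 * r ^ 4 * a2 * b1 * b2 * d2 * F3 - s ^ 2 * r ^ 4 * a2 * b1 * b2 * d1 * F3 + s ^ 2 * r ^ 4 * a2 ^ 2 * b1 * b2 * F2 + s ^ 2 * r ^ 4 * a1 * b1 * d2 * F2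 + s ^ 2 * r ^ 4 * a1 * a2 * b2 ^ 2 * F2 - s ^ 2 * r ^ 4 * a1 ^ 2 * b1 ^ 2 * F2 - s ^ 2 * r ^ 6 * a2 * b2 * d1 * F2 + 2 * s ^ 2 * r ^ 6 * a2 ^ 2 * b2 ^ 2 * F2 - 2 * s ^ 2 * r ^ 6 * a1 * a2 * b1 * b2 * F2 - s ^ 2 * r ^ 6 * a1 * a2 * b1 * b2 ^ 2 * F3 - s ^ 2 * r ^ 6 * a1 * a2 * b1 ^ 2 * b2 * F3 - s ^ 2 * r ^ 8 * a2 * b2 ^ 2 * d1 * F3 - s ^ 2 * r ^ 8 * a2 * b1 * b2 * d1 * F3 + s ^ 2 * r ^ 8 * a2 ^ 2 * b2 ^ 2 * F2 + s ^ 2 * r ^ 10 * a2 * b2 ^ 2 * d2 * F3 + s ^ 2 * r ^ 10 * a2 * b1 * b2 * d2 * F3 - s ^ 2 * r ^ 10 * a2 ^ 2 * b2 ^ 2 * F2 - s ^ 2 * r ^ 10 * a1 * a2 * b1 * b2 ^ 2 * F3 - s ^ 2 * r ^ 10 * a1 * a2 * b1 ^ 2 * b2 * F3 + s ^ 3 *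 r * d1 * d2 * F2 + s ^ 3 * r * d1 ^ 2 * F2 - s ^ 3 * r * b2 * d1 * d2 * F3 - s ^ 3 * r * b2 * d1 ^ 2 * F3 - s ^ 3 * r * b1 * d1 * d2 * F3 - s ^ 3 * r * b1 * d1 ^ 2 * F3 - s ^ 3 * r * a2 * b2 * d2 * F2 + 2 * s ^ 3 * r * a2 * b2 ^ 2 * d2 * F3 + 2 * s ^ 3 * r * a2 * b2 ^ 2 * d1 * F3 - s ^ 3 * r * a2 * b1 * d2 * F2 + 2 * s ^ 3 * r * a2 * b1 * b2 * d2 * F3 + 2 * s ^ 3 * r * a2 * b1 * b2 * d1 * F3 - s ^ 3 * r * a2 ^ 2 * b2 ^ 2 * F2 - s ^ 3 * r * a2 ^ 2 * b1 * b2 * F2 - s ^ 3 * r * a1 * b2 * d2 * F2 - s ^ 3 * r * a1 * b1 * d2 * F2 - s ^ 3 * r * a1 * a2 * b2 ^ 2 * F2 - s ^ 3 * r * a1 * a2 * b1 * F1 - s ^ 3 * r * a1 * a2 * b1 * b2 * F2 - s ^ 3 * r * a1 ^ 2 * b1 * F1 - s ^ 3 * r ^ 3 * a2 * b2 * d2 *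 F2 - s ^ 3 * r ^ 3 * a2 * b2 ^ 2 * d2 * F3 + s ^ 3 * r ^ 3 * a2 * b1 * d2 * F2 + s ^ 3 * r ^ 3 * a2 * b1 * d1 * F2 - s ^ 3 * r ^ 3 * a2 * b1 * b2 * d2 * F3 + s ^ 3 * r ^ 3 * a2 ^ 2 * b2 * F1 - s ^ 3 * r ^ 3 * a2 ^ 2 * b2 ^ 2 * F2 - s ^ 3 * r ^ 3 * a2 ^ 2 * b1 * b2 * F2 + s ^ 3 * r ^ 3 * a1 * b2 * d2 * F2 + s ^ 3 * r ^ 3 * a1 * b2 * d1 * F2 - s ^ 3 * r ^ 3 * a1 * b1 * d1 * F2 - s ^ 3 * r ^ 3 * a1 * b1 * b2 * d1 * F3 - s ^ 3 * r ^ 3 * a1 * b1 ^ 2 * d1 * F3 - s ^ 3 * r ^ 3 * a1 * a2 * b2 ^ 2 * F2 + 2 * s ^ 3 * r ^ 3 * a1 * a2 * b1 * b2 ^ 2 * F3 - s ^ 3 * r ^ 3 * a1 * a2 * b1 ^ 2 * F2 + 2 * s ^ 3 * r ^ 3 * a1 * a2 * b1 ^ 2 * b2 * F3 + s ^ 3 *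 r ^ 3 * a1 ^ 2 * b1 * F1 - s ^ 3 * r ^ 3 * a1 ^ 2 * b1 * b2 * F2 - s ^ 3 * r ^ 3 * a1 ^ 2 * b1 ^ 2 * F2 + s ^ 3 * r ^ 5 * b2 * d1 * d2 * F3 + s ^ 3 * r ^ 5 * b1 * d1 * d2 * F3 + 2 * s ^ 3 * r ^ 5 * a2 * b2 * d2 * F2 + 2 * s ^ 3 * r ^ 5 * a2 * b2 * d1 * F2 - 2 * s ^ 3 * r ^ 5 * a2 * b2 ^ 2 * d2 * F3 - s ^ 3 * r ^ 5 * a2 * b2 ^ 2 * d1 * F3 - 2 * s ^ 3 * r ^ 5 * a2 * b1 * b2 * d2 * F3 - s ^ 3 * r ^ 5 * a2 * b1 * b2 * d1 * F3 + s ^ 3 * r ^ 5 * a2 ^ 2 * b1 * b2 * F2 + s ^ 3 * r ^ 5 * a1 * b1 * d2 * F2 + s ^ 3 * r ^ 5 * a1 * a2 * b2 ^ 2 * F2 - s ^ 3 * r ^ 5 * a1 ^ 2 * b1 ^ 2 * F2 - s ^ 3 * r ^ 7 * a2 * b2 * d1 * F2 + 2 * s ^ 3 * r ^ 7 * a2 ^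 2 * b2 ^ 2 * F2 + s ^ 3 * r ^ 7 * a2 ^ 2 * b1 * b2 * F2 + s ^ 3 * r ^ 7 * a1 * a2 * b2 ^ 2 * F2 - s ^ 3 * r ^ 7 * a1 * a2 * b1 * b2 ^ 2 * F3 - s ^ 3 * r ^ 7 * a1 * a2 * b1 ^ 2 * b2 * F3 - s ^ 3 * r ^ 9 * a2 * b2 ^ 2 * d1 * F3 - s ^ 3 * r ^ 9 * a2 * b1 * b2 * d1 * F3 + s ^ 3 * r ^ 9 * a2 ^ 2 * b2 ^ 2 * F2 + s ^ 3 * r ^ 11 * a2 * b2 ^ 2 * d2 * F3 + s ^ 3 * r ^ 11 * a2 * b1 * b2 * d2 * F3 - s ^ 3 * r ^ 11 * a2 ^ 2 * b2 ^ 2 * F2 - s ^ 3 * r ^ 11 * a1 * a2 * b1 * b2 ^ 2 * F3 - s ^ 3 * r ^ 11 * a1 * a2 * b1 ^ 2 * b2 * F3 - s ^ 4 * b2 * d1 * d2 * F3 - s ^ 4 * b2 * d1 ^ 2 * F3 - s ^ 4 * b1 * d1 * d2 * F3 - s ^ 4 * b1 * d1 ^ 2 * F3 - 2 * s ^ 4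 * a2 * b2 * d1 * F2 - s ^ 4 * a2 * b2 ^ 2 * d1 * F3 - s ^ 4 * a2 * b1 * b2 * d1 * F3 + 2 * s ^ 4 * a2 ^ 2 * b2 ^ 2 * F2 + s ^ 4 * a2 ^ 2 * b2 ^ 3 * F3 + s ^ 4 * a2 ^ 2 * b1 * b2 ^ 2 * F3 - s ^ 4 * a1 * b1 * d2 * F2 + s ^ 4 * a1 * a2 * b1 * F1 - s ^ 4 * a1 * a2 * b1 * b2 * F2 + s ^ 4 * r ^ 2 * b2 * d1 * d2 * F3 + s ^ 4 * r ^ 2 * b1 * d1 * d2 * F3 + s ^ 4 * r ^ 2 * a2 * b2 * d1 * F2 - s ^ 4 * r ^ 2 * a2 ^ 2 * b2 ^ 2 * F2 - s ^ 4 * r ^ 2 * a1 * b1 * b2 * d2 * F3 - 2 * s ^ 4 * r ^ 2 * a1 * b1 * b2 * d1 * F3 - s ^ 4 * r ^ 2 * a1 * b1 ^ 2 * d2 * F3 - 2 * s ^ 4 * r ^ 2 * a1 * b1 ^ 2 * d1 * F3 + s ^ 4 * r ^ 2 * a1 * a2 * b1 ^ 2 * F2 + s ^ 4 * r ^ 2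 * a1 ^ 2 * b1 * b2 * F2 - 2 * s ^ 4 * r ^ 4 * a2 ^ 2 * b2 ^ 2 * F2 - s ^ 4 * r ^ 4 * a2 ^ 2 * b2 ^ 3 * F3 - s ^ 4 * r ^ 4 * a2 ^ 2 * b1 * b2 ^ 2 * F3 + 2 * s ^ 4 * r ^ 4 * a1 * a2 * b1 * b2 * F2 - 2 * s ^ 4 * r ^ 4 * a1 ^ 2 * b1 ^ 2 * F2 - s ^ 4 * r ^ 4 * a1 ^ 2 * b1 ^ 2 * b2 * F3 - s ^ 4 * r ^ 4 * a1 ^ 2 * b1 ^ 3 * F3 + s ^ 4 * r ^ 6 * a2 ^ 2 * b2 ^ 2 * F2 + s ^ 4 * r ^ 6 * a1 * b1 * b2 * d2 * F3 + s ^ 4 * r ^ 6 * a1 * b1 ^ 2 * d2 * F3 + 2 * s ^ 4 * r ^ 6 * a1 * a2 * b1 * b2 * F2 + s ^ 4 * r ^ 8 * a2 * b2 ^ 2 * d1 * F3 + s ^ 4 * r ^ 8 * a2 * b1 * b2 * d1 * F3 - s ^ 4 * r ^ 8 * a2 ^ 2 * b2 ^ 3 * F3 - s ^ 4 * r ^ 8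 * a2 ^ 2 * b1 * b2 ^ 2 * F3 - s ^ 4 * r ^ 8 * a1 * a2 * b1 * b2 * F2 + s ^ 4 * r ^ 12 * a2 ^ 2 * b2 ^ 3 * F3 + s ^ 4 * r ^ 12 * a2 ^ 2 * b1 * b2 ^ 2 * F3 - s ^ 5 * r * b2 * d1 * d2 * F3 - s ^ 5 * r * b2 * d1 ^ 2 * F3 - s ^ 5 * r * b1 * d1 * d2 * F3 - s ^ 5 * r * b1 * d1 ^ 2 * F3 - s ^ 5 * r * a2 * b2 ^ 2 * d1 * F3 + s ^ 5 * r * a2 * b1 * d1 * F2 - s ^ 5 * r * a2 * b1 * b2 * d1 * F3 + s ^ 5 * r * a2 ^ 2 * b2 ^ 3 * F3 - s ^ 5 * r * a2 ^ 2 * b1 * b2 * F2 + s ^ 5 * r * a2 ^ 2 * b1 * b2 ^ 2 * F3 + s ^ 5 * r * a1 * b2 * d1 * F2 - s ^ 5 * r * a1 * b1 * d2 * F2 - s ^ 5 * r * a1 * a2 * b2 ^ 2 * F2 + s ^ 5 * r * a1 * a2 * b1 * F1 - s ^ 5 * r * a1 * a2 * b1 * b2 * F2 + s ^ 5 * r ^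 3 * b2 * d1 * d2 * F3 + s ^ 5 * r ^ 3 * b1 * d1 * d2 * F3 + s ^ 5 * r ^ 3 * a2 * b2 * d1 * F2 - s ^ 5 * r ^ 3 * a2 ^ 2 * b2 ^ 2 * F2 + 2 * s ^ 5 * r ^ 3 * a1 * b1 * d2 * F2 + 2 * s ^ 5 * r ^ 3 * a1 * b1 * d1 * F2 - s ^ 5 * r ^ 3 * a1 * b1 * b2 * d2 * F3 - 2 * s ^ 5 * r ^ 3 * a1 * b1 * b2 * d1 * F3 - s ^ 5 * r ^ 3 * a1 * b1 ^ 2 * d2 * F3 - 2 * s ^ 5 * r ^ 3 * a1 * b1 ^ 2 * d1 * F3 + s ^ 5 * r ^ 3 * a1 * a2 * b1 ^ 2 * F2 + s ^ 5 * r ^ 3 * a1 ^ 2 * b1 * b2 * F2 - s ^ 5 * r ^ 5 * a2 ^ 2 * b2 ^ 3 * F3 + s ^ 5 * r ^ 5 * a2 ^ 2 * b1 * b2 * F2 - s ^ 5 * r ^ 5 * a2 ^ 2 * b1 * b2 ^ 2 * F3 + s ^ 5 * r ^ 5 * a1 * a2 * b2 ^ 2 * F2 + 2 * s ^ 5 *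 r ^ 5 * a1 * a2 * b1 * b2 * F2 + s ^ 5 * r ^ 5 * a1 * a2 * b1 ^ 2 * F2 + s ^ 5 * r ^ 5 * a1 ^ 2 * b1 * b2 * F2 - s ^ 5 * r ^ 5 * a1 ^ 2 * b1 ^ 2 * b2 * F3 - s ^ 5 * r ^ 5 * a1 ^ 2 * b1 ^ 3 * F3 + s ^ 5 * r ^ 7 * a2 ^ 2 * b2 ^ 2 * F2 + s ^ 5 * r ^ 7 * a1 * b1 * b2 * d2 * F3 + s ^ 5 * r ^ 7 * a1 * b1 ^ 2 * d2 * F3 + 2 * s ^ 5 * r ^ 7 * a1 * a2 * b1 * b2 * F2 + s ^ 5 * r ^ 9 * a2 * b2 ^ 2 * d1 * F3 + s ^ 5 * r ^ 9 * a2 * b1 * b2 * d1 * F3 - s ^ 5 * r ^ 9 * a2 ^ 2 * b2 ^ 3 * F3 - s ^ 5 * r ^ 9 * a2 ^ 2 * b1 * b2 ^ 2 * F3 - s ^ 5 * r ^ 9 * a1 * a2 * b1 * b2 * F2 + s ^ 5 * r ^ 13 * a2 ^ 2 * b2 ^ 3 * F3 + s ^ 5 * r ^ 13 * a2 ^ 2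 * b1 * b2 ^ 2 * F3 + s ^ 6 * b2 * d1 ^ 2 * F3 + s ^ 6 * b1 * d1 ^ 2 * F3 - s ^ 6 * a2 * b2 ^ 2 * d1 * F3 - s ^ 6 * a2 * b1 * b2 * d1 * F3 + s ^ 6 * a1 * b1 * d2 * F2 + 2 * s ^ 6 * a1 * b1 * d1 * F2 - s ^ 6 * a1 * a2 * b1 * b2 * F2 - s ^ 6 * r ^ 2 * a1 * b1 * d2 * F2 - 2 * s ^ 6 * r ^ 2 * a1 * a2 * b1 * b2 * F2 - s ^ 6 * r ^ 2 * a1 * a2 * b1 * b2 ^ 2 * F3 - s ^ 6 * r ^ 2 * a1 * a2 * b1 ^ 2 * b2 * F3 + 2 * s ^ 6 * r ^ 2 * a1 ^ 2 * b1 ^ 2 * F2 + s ^ 6 * r ^ 4 * a2 * b2 ^ 2 * d1 * F3 + s ^ 6 * r ^ 4 * a2 * b1 * b2 * d1 * F3 + 2 * s ^ 6 * r ^ 4 * a1 * a2 * b1 * b2 * F2 + s ^ 6 * r ^ 4 * a1 ^ 2 * b1 ^ 2 * F2 + s ^ 6 * r ^ 10 * a1 * a2 * b1 * b2 ^ 2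 * F3 + s ^ 6 * r ^ 10 * a1 * a2 * b1 ^ 2 * b2 * F3 + s ^ 7 * r * b2 * d1 ^ 2 * F3 + s ^ 7 * r * b1 * d1 ^ 2 * F3 - s ^ 7 * r * a2 * b2 ^ 2 * d1 * F3 - s ^ 7 * r * a2 * b1 * b2 * d1 * F3 + s ^ 7 * r * a1 * b1 * d2 * F2 + 2 * s ^ 7 * r * a1 * b1 * d1 * F2 - s ^ 7 * r * a1 * a2 * b1 * b2 * F2 - s ^ 7 * r ^ 3 * a1 * b1 * d2 * F2 - s ^ 7 * r ^ 3 * a1 * a2 * b1 * b2 ^ 2 * F3 + s ^ 7 * r ^ 3 * a1 * a2 * b1 ^ 2 * F2 - s ^ 7 * r ^ 3 * a1 * a2 * b1 ^ 2 * b2 * F3 + s ^ 7 * r ^ 3 * a1 ^ 2 * b1 * b2 * F2 + 2 * s ^ 7 * r ^ 3 * a1 ^ 2 * b1 ^ 2 * F2 + s ^ 7 * r ^ 5 * a2 * b2 ^ 2 * d1 * F3 + s ^ 7 * r ^ 5 * a2 * b1 * b2 * d1 * F3 + 2 * s ^ 7 * r ^ 5 * a1 * a2 * b1 * b2 * F2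 + s ^ 7 * r ^ 5 * a1 ^ 2 * b1 ^ 2 * F2 + s ^ 7 * r ^ 11 * a1 * a2 * b1 * b2 ^ 2 * F3 + s ^ 7 * r ^ 11 * a1 * a2 * b1 ^ 2 * b2 * F3 - s ^ 8 * a1 * b1 * d1 * F2 + s ^ 8 * a1 * a2 * b1 * b2 * F2 - s ^ 8 * r ^ 2 * a1 * b1 * b2 * d2 * F3 - s ^ 8 * r ^ 2 * a1 * b1 ^ 2 * d2 * F3 + s ^ 8 * r ^ 2 * a1 ^ 2 * b1 ^ 2 * F2 + s ^ 8 * r ^ 4 * a1 * b1 * b2 * d2 * F3 + s ^ 8 * r ^ 4 * a1 * b1 ^ 2 * d2 * F3 - s ^ 8 * r ^ 4 * a1 * a2 * b1 * b2 * F2 - s ^ 8 * r ^ 4 * a1 ^ 2 * b1 ^ 2 * b2 * F3 - s ^ 8 * r ^ 4 * a1 ^ 2 * b1 ^ 3 * F3 - s ^ 9 * r * a1 * b1 * d1 * F2 + s ^ 9 * r * a1 * a2 * b1 * b2 * F2 - s ^ 9 * r ^ 3 * a1 * b1 * b2 * d2 * F3 - s ^ 9 * r ^ 3 * a1 * b1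 ^ 2 * d2 * F3 + s ^ 9 * r ^ 3 * a1 ^ 2 * b1 ^ 2 * F2 + s ^ 9 * r ^ 5 * a1 * b1 * b2 * d2 * F3 + s ^ 9 * r ^ 5 * a1 * b1 ^ 2 * d2 * F3 - s ^ 9 * r ^ 5 * a1 * a2 * b1 * b2 * F2 - s ^ 9 * r ^ 5 * a1 ^ 2 * b1 ^ 2 * b2 * F3 - s ^ 9 * r ^ 5 * a1 ^ 2 * b1 ^ 3 * F3 + s ^ 10 * r ^ 2 * a1 * b1 * b2 * d1 * F3 + s ^ 10 * r ^ 2 * a1 * b1 ^ 2 * d1 * F3 - s ^ 10 * r ^ 2 * a1 * a2 * b1 * b2 ^ 2 * F3 - s ^ 10 * r ^ 2 * a1 * a2 * b1 ^ 2 * b2 * F3 - s ^ 10 * r ^ 2 * a1 ^ 2 * b1 ^ 2 * F2 + s ^ 10 * r ^ 6 * a1 * a2 * b1 * b2 ^ 2 * F3 + s ^ 10 * r ^ 6 * a1 * a2 * b1 ^ 2 * b2 * F3 + s ^ 11 * r ^ 3 * a1 * b1 * b2 * d1 * F3 + s ^ 11 * r ^ 3 * a1 * b1 ^ 2 * d1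 * F3 - s ^ 11 * r ^ 3 * a1 * a2 * b1 * b2 ^ 2 * F3 - s ^ 11 * r ^ 3 * a1 * a2 * b1 ^ 2 * b2 * F3 - s ^ 11 * r ^ 3 * a1 ^ 2 * b1 ^ 2 * F2 + s ^ 11 * r ^ 7 * a1 * a2 * b1 * b2 ^ 2 * F3 + s ^ 11 * r ^ 7 * a1 * a2 * b1 ^ 2 * b2 * F3 + s ^ 12 * r ^ 4 * a1 ^ 2 * b1 ^ 2 * b2 * F3 + s ^ 12 * r ^ 4 * a1 ^ 2 * b1 ^ 3 * F3 + s ^ 13 * r ^ 5 * a1 ^ 2 * b1 ^ 2 * b2 * F3 + s ^ 13 * r ^ 5 * a1 ^ 2 * b1 ^ 3 * F3) * hsr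



variable {F : Type*} [Field F]

/-- The operator `K₁`: `(K₁ f)_n = h_n f_n + g_{n+1} f_{n+1}`. -/
def K1 (h g : ℕ → F) (f : ℕ → F) : ℕ → F := fun n => h n * f n + g (n + 1) * f (n + 1)

/-- The operator `K₂`: `(K₂ f)_n = x_n f_n + f_{n-1}` (with `f_{-1} = 0`). -/
def K2 (x : ℕ → F) (f : ℕ → F) : ℕ → F :=
  fun n => x n * f n + if n = 0 then 0 else f (n - 1)

/-- Dual Zhedanov relation
`(q+q⁻¹) K₁K₂K₁ − K₁²K₂ − K₂K₁² = C₂K₂ + DK₁ + G₂`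
for the Verde-Star operator pair, with
`x_k = b₁q^k + b₂q^{-k}`, `h_k = a₁q^k + a₂q^{-k}`,
`g_k = d₃q^{2k} + d₁q^k + d₀ + d₂q^{-k} + d₄q^{-2k}`,
`Σdᵢ = 0`, `d₃ = q⁻¹a₁b₁`, `d₄ = qa₂b₂`, and `s` a square root of `q`. -/
theorem stmt15 (q s a1 a2 b1 b2 d0 d1 d2 d3 d4 : F)
    (hq : q ≠ 0) (hq2 : q ^ 2 ≠ 1) (hs : s ^ 2 = q) (hs0 : s ≠ 0)
    (hsum : d0 + d1 + d2 + d3 + d4 = 0)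
    (hd3 : d3 = q⁻¹ * a1 * b1) (hd4 : d4 = q * a2 * b2)
    (x h g : ℕ → F)
    (hx : ∀ k, x k = b1 * q ^ k + b2 * q ^ (-(k : ℤ)))
    (hh : ∀ k, h k = a1 * q ^ k + a2 * q ^ (-(k : ℤ)))
    (hg : ∀ k, g k = d3 * q ^ (2 * k) + d1 * q ^ k + d0 +
        d2 * q ^ (-(k : ℤ)) + d4 * q ^ (-(2 * k : ℤ))) :
    ∀ (f : ℕ → F) (n : ℕ),
      (q + q⁻¹) * K1 h g (K2 x (K1 h g f)) n
          - K1 h g (K1 h g (K2 x f)) n - K2 x (K1 h g (K1 h g f)) n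
        = (q - q⁻¹) ^ 2 * a1 * a2 * K2 x f n
          + (-(s - s⁻¹) ^ 2 * ((s⁻¹ * a1 - s * a2) * (s⁻¹ * b1 - s * b2) + d1 + d2))
              * K1 h g f n
          + (s - s⁻¹) * (q - q⁻¹) * (s⁻¹ * a1 * d2 + s * a2 * d1) * f n := by
  subst hs
  intro f n
  have hsr : s * s⁻¹ = 1 := mul_inv_cancel₀ hs0
  have hd3' : d3 = (s⁻¹) ^ 2 * a1 * b1 := by rw [hd3, ← inv_pow]
  have hd0 : d0 = -(d1 + d2 + d3 + d4) := by linear_combination hsum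
  simp only [K1, K2]
  cases n with
  | zero =>
    have e1 : x 0 = b1 + b2 := by rw [hx]; norm_num
    have e2 : x 1 = b1 * s ^ 2 + b2 * s⁻¹ ^ 2 := by
      rw [hx, aux_zpow]; field_simp
    have e3 : x 2 = b1 * s ^ 4 + b2 * s⁻¹ ^ 4 := by
      rw [hx, aux_zpow]; field_simp
    have e4 : h 0 = a1 + a2 := by rw [hh]; norm_num
    have e5 : h 1 = a1 * s ^ 2 + a2 * s⁻¹ ^ 2 := by
      rw [hh, aux_zpow]; field_simp
    have e6 : g 1 = d3 * s ^ 4 + d1 * s ^ 2 + d0 + d2 * s⁻¹ ^ 2 + d4 * s⁻¹ ^ 4 := by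
      rw [hg, aux_zpow, aux_zpow2]; field_simp
      all_goals try exact Or.inl trivial
      all_goals ring
    have e7 : g 2 = d3 * s ^ 8 + d1 * s ^ 4 + d0 + d2 * s⁻¹ ^ 4 + d4 * s⁻¹ ^ 8 := by
      rw [hg, aux_zpow, aux_zpow2]; field_simp
      all_goals try exact Or.inl trivial
      all_goals ring
    norm_num [e1, e2, e3, e4, e5, e6, e7]
    linear_combination master0 s s⁻¹ a1 a2 b1 b2 d0 d1 d2 d3 d4 (f 0) (f 1) (f 2)
      hsr hd3' hd4 hd0
  | succ m =>
    have ht0 : ((s : F) ^ 2) ^ (m + 1) ≠ 0 := pow_ne_zero _ (pow_ne_zero _ hs0)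
    have htu : ((s : F) ^ 2) ^ (m + 1) * (((s : F) ^ 2) ^ (m + 1))⁻¹ = 1 :=
      mul_inv_cancel₀ ht0
    set T : F := ((s : F) ^ 2) ^ (m + 1) with hT
    have e1 : x (m + 1) = b1 * T + b2 * T⁻¹ := by rw [hx, aux_zpow]
    have e2 : x (m + 2) = b1 * T * s ^ 2 + b2 * T⁻¹ * s⁻¹ ^ 2 := by
      rw [hx, aux_zpow, hT]; field_simp; ring
    have e3 : x (m + 3) = b1 * T * s ^ 4 + b2 * T⁻¹ * s⁻¹ ^ 4 := by
      rw [hx, aux_zpow, hT]; field_simp; ring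
    have e4 : h m = a1 * T * s⁻¹ ^ 2 + a2 * T⁻¹ * s ^ 2 := by
      rw [hh, aux_zpow, hT]; field_simp; ring
    have e5 : h (m + 1) = a1 * T + a2 * T⁻¹ := by rw [hh, aux_zpow]
    have e6 : h (m + 2) = a1 * T * s ^ 2 + a2 * T⁻¹ * s⁻¹ ^ 2 := by
      rw [hh, aux_zpow, hT]; field_simp; ring
    have e7 : g (m + 1) = d3 * T ^ 2 + d1 * T + d0 + d2 * T⁻¹ + d4 * T⁻¹ ^ 2 := by
      rw [hg, aux_zpow, aux_zpow2, hT]; ring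
    have e8 : g (m + 2) = d3 * T ^ 2 * s ^ 4 + d1 * T * s ^ 2 + d0 + d2 * T⁻¹ * s⁻¹ ^ 2
        + d4 * T⁻¹ ^ 2 * s⁻¹ ^ 4 := by
      rw [hg, aux_zpow, aux_zpow2, hT]; field_simp
      all_goals try exact Or.inl trivial
      all_goals ring
    have e9 : g (m + 3) = d3 * T ^ 2 * s ^ 8 + d1 * T * s ^ 4 + d0 + d2 * T⁻¹ * s⁻¹ ^ 4
        + d4 * T⁻¹ ^ 2 * s⁻¹ ^ 8 := by
      rw [hg, aux_zpow, aux_zpow2, hT]; field_simp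
      all_goals try exact Or.inl trivial
      all_goals ring
    have hm1 : m + 1 ≠ 0 := Nat.succ_ne_zero m
    have hm2 : m + 1 + 1 ≠ 0 := Nat.succ_ne_zero (m + 1)
    have hm3 : m + 1 + 1 + 1 ≠ 0 := Nat.succ_ne_zero (m + 1 + 1)
    simp only [if_neg hm1, if_neg hm2, if_neg hm3, Nat.add_sub_cancel]
    rw [show m + 1 + 1 = m + 2 from rfl, show m + 2 + 1 = m + 3 from rfl]
    rw [e1, e2, e3, e4, e5, e6, e7, e8, e9]
    linear_combination master1 s s⁻¹ T T⁻¹ a1 a2 b1 b2 d0 d1 d2 d3 d4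
      (f m) (f (m + 1)) (f (m + 2)) (f (m + 3)) hsr htu hd3' hd4 hd0
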